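/- arXiv:1705.10933 — 9 statements merged into one kernel-verified Lean document; each statement's English description precedes it below -/
import Mathlib

section
/- If p is a prime, e ≥ 1, and σ_∞(p^e) is a prime power (a power q^f of a prime q with f ≥ 1), then either e = 1 and p is a Mersenne prime (p + 1 is a power of 2), or p = 2, e = 2^l for some l ≥ 0, and σ_∞(p^e) = 2^{2^l} + 1 is a Fermat prime. -/
-- If q^f = 2^(2^l) + 1 with q prime and f ≥ 1, then f = 1.
lemma aux_fermat (q f l : ℕ) (hq : q.Prime) (hf : 0 < f)
    (h : q ^ f = 2 ^ 2 ^ l + 1) : f = 1 := by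
  by_contra hf1
  have hf2 : 2 ≤ f := by omega
  have hm1 : 1 ≤ 2 ^ l := Nat.one_le_two_pow
  have hqodd : Odd q := by
    refine hq.odd_of_ne_two fun hq2 => ?_
    subst hq2
    have h1 : 2 ∣ 2 ^ f := dvd_pow_self 2 (by omega)
    have h2 : 2 ∣ 2 ^ 2 ^ l := dvd_pow_self 2 (by omega)
    omega
  have hq3 : 3 ≤ q := by
    rcases hqodd with ⟨t, ht⟩
    have := hq.two_le
    omega
  rcases Nat.even_or_odd f with hfe | hfo
  · -- f even: f = 2g
    obtain ⟨g, hg⟩ := hfe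
    have hg1 : 1 ≤ g := by omega
    set x := q ^ g with hxdef
    have hx3 : 3 ≤ x := le_trans hq3 (Nat.le_self_pow (by omega) q)
    have hxx : x * x = 2 ^ 2 ^ l + 1 := by
      rw [hxdef, ← pow_add, ← hg, h]
    obtain ⟨t, ht⟩ : ∃ t, x = t + 1 := ⟨x - 1, by omega⟩
    have hkey : t * (t + 2) = 2 ^ 2 ^ l := by nlinarith [hxx]
    have hdvd1 : t ∣ 2 ^ 2 ^ l := ⟨t + 2, hkey.symm⟩
    have hdvd2 : (t + 2) ∣ 2 ^ 2 ^ l := Dvd.intro_left t hkey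
    obtain ⟨a, ha, hae⟩ := (Nat.dvd_prime_pow Nat.prime_two).mp hdvd1
    obtain ⟨b, hb, hbe⟩ := (Nat.dvd_prime_pow Nat.prime_two).mp hdvd2
    have ht2 : 2 ≤ t := by omega
    have ha1 : 1 ≤ a := by
      by_contra hcon
      interval_cases a <;> omega
    have hb2 : 2 ≤ b := by
      by_contra hcon
      interval_cases b <;> omega
    -- 2^b = 2^a + 2, with a ≥ 1, b ≥ 2 : forces a = 1
    have ha1' : a = 1 := by
      by_contra hcon
      have ha2 : 2 ≤ a := by omega
      have h4a : (4:ℕ) ∣ t := by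
        rw [hae]
        have : (2:ℕ)^2 ∣ 2 ^ a := pow_dvd_pow 2 ha2
        simpa using this
      have h4b : (4:ℕ) ∣ t + 2 := by
        rw [hbe]
        have : (2:ℕ)^2 ∣ 2 ^ b := pow_dvd_pow 2 hb2
        simpa using this
      omega
    have ht2' : t = 2 := by rw [hae, ha1', pow_one]
    -- then x = 3, q^g = 3, 2^(2^l) = 8
    have hx3' : x = 3 := by omega
    have h8 : 2 ^ 2 ^ l = 8 := by rw [← hkey, ht2']
    have h3 : 2 ^ l = 3 := by
      have : (2:ℕ) ^ 2 ^ l = 2 ^ 3 := by norm_num [h8]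
      exact Nat.pow_right_injective (by norm_num) this
    rcases Nat.eq_zero_or_pos l with hl | hl
    · simp [hl] at h3
    · have : 2 ∣ 2 ^ l := dvd_pow_self 2 (by omega)
      omega
  · -- f odd: geometric sum argument
    set S := ∑ i ∈ Finset.range f, q ^ i with hSdef
    have hdvd : (S : ℤ) ∣ (2:ℤ) ^ 2 ^ l := by
      refine ⟨(q : ℤ) - 1, ?_⟩
      have hg := geom_sum_mul (q : ℤ) f
      have : ((q : ℤ) ^ f) = 2 ^ 2 ^ l + 1 := by exact_mod_cast congrArg (Nat.cast : ℕ → ℤ) h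
      push_cast [hSdef]
      rw [hg, this]
      ring
    have hdvdN : S ∣ 2 ^ 2 ^ l := by
      have := Int.natCast_dvd_natCast.mp (by push_cast at hdvd ⊢; exact hdvd : ((S:ℤ)) ∣ ((2 ^ 2 ^ l : ℕ) : ℤ))
      exact this
    have hSodd : S % 2 = 1 := by
      rw [hSdef, Finset.sum_nat_mod]
      have hqm : q % 2 = 1 := Nat.odd_iff.mp hqodd
      have : ∀ i ∈ Finset.range f, q ^ i % 2 = 1 := by
        intro i _
        rw [Nat.pow_mod, hqm, one_pow]
        rfl
      rw [Finset.sum_congr rfl this]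
      simp [Nat.odd_iff.mp hfo]
    have hcop : Nat.Coprime S (2 ^ 2 ^ l) :=
      Nat.Coprime.pow_right _ (Nat.coprime_two_right.mpr (Nat.odd_iff.mpr hSodd))
    have hS1 : S = 1 := hcop.eq_one_of_dvd hdvdN
    have hqS : q ≤ S := by
      have h1f : 1 ∈ Finset.range f := Finset.mem_range.mpr (by omega)
      calc q = q ^ 1 := (pow_one q).symm
        _ ≤ S := Finset.single_le_sum (fun i _ => Nat.zero_le _) h1f
    omega

/-- The sum of infinitary divisors of `n`: for `n = ∏ p ^ e_p`, it equals
`∏_p ∏_{j : bit j of e_p is 1} (p ^ 2 ^ j + 1)`. -/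
def infsigma (n : ℕ) : ℕ :=
  n.factorization.prod fun p e =>
    ∏ j ∈ Finset.range e, if e.testBit j then p ^ 2 ^ j + 1 else 1

lemma infsigma_prime_pow (p e : ℕ) (hp : p.Prime) :
    infsigma (p ^ e) = ∏ j ∈ Finset.range e, if e.testBit j then p ^ 2 ^ j + 1 else 1 := by
  unfold infsigma
  rw [hp.factorization_pow]
  exact Finsupp.prod_single_index (by simp)

theorem infsigma_prime_pow_eq_prime_pow (p e : ℕ) (hp : p.Prime) (he : 1 ≤ e)
    (h : IsPrimePow (infsigma (p ^ e))) :
    (e = 1 ∧ ∃ k : ℕ, p + 1 = 2 ^ k) ∨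
    (p = 2 ∧ ∃ l : ℕ, e = 2 ^ l ∧ infsigma (p ^ e) = 2 ^ 2 ^ l + 1 ∧
      Nat.Prime (2 ^ 2 ^ l + 1)) := by
  obtain ⟨q, f, hq', hf, hqf⟩ := h
  have hq : Nat.Prime q := Nat.prime_iff.mpr hq'
  rw [infsigma_prime_pow p e hp] at hqf
  set S : Finset ℕ := (Finset.range e).filter (fun j => e.testBit j) with hSdef
  have hprod : q ^ f = ∏ j ∈ S, (p ^ 2 ^ j + 1) := by
    rw [hqf, hSdef, Finset.prod_filter]
  have hmemS : ∀ j, j ∈ S ↔ e.testBit j = true := by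
    intro j
    constructor
    · intro hj; exact (Finset.mem_filter.mp hj).2
    · intro hj
      refine Finset.mem_filter.mpr ⟨Finset.mem_range.mpr ?_, hj⟩
      calc j < 2 ^ j := Nat.lt_two_pow_self (n := j)
        _ ≤ e := Nat.ge_two_pow_of_testBit hj
  have hfactor : ∀ j ∈ S, (p ^ 2 ^ j + 1) ∣ q ^ f := by
    intro j hj
    rw [hprod]; exact Finset.dvd_prod_of_mem _ hj
  have hfactor2 : ∀ j : ℕ, 2 ≤ p ^ 2 ^ j := by
    intro j
    calc 2 ≤ p := hp.two_le
      _ ≤ p ^ 2 ^ j := Nat.le_self_pow (by positivity) p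
  have hqdvd : ∀ j ∈ S, q ∣ (p ^ 2 ^ j + 1) := by
    intro j hj
    obtain ⟨m, hm, hme⟩ := (Nat.dvd_prime_pow hq).mp (hfactor j hj)
    have hm1 : m ≠ 0 := by
      rintro rfl
      have := hfactor2 j
      simp only [pow_zero] at hme
      omega
    rw [hme]
    exact dvd_pow_self q hm1
  obtain ⟨l, hl⟩ : ∃ l, l ∈ S := by
    obtain ⟨i, hi⟩ := Nat.exists_testBit_of_ne_zero (x := e) (by omega)
    exact ⟨i, (hmemS i).mpr hi⟩
  by_cases hp2 : p = 2
  · right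
    subst hp2
    have huniq : ∀ j ∈ S, j = l := by
      intro j hj
      by_contra hne
      have h1 := hqdvd j hj
      have h2 := hqdvd l hl
      have hcop : Nat.Coprime (2 ^ 2 ^ j + 1) (2 ^ 2 ^ l + 1) := by
        simpa [Nat.fermatNumber] using Nat.coprime_fermatNumber_fermatNumber hne
      have := Nat.eq_one_of_dvd_coprimes hcop h1 h2
      exact hq.one_lt.ne' this
    have he2 : e = 2 ^ l := by
      apply Nat.eq_of_testBit_eq
      intro i
      by_cases hi : e.testBit i = true
      · have : i = l := huniq i ((hmemS i).mpr hi)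
        subst this
        rw [hi, Nat.testBit_two_pow_self]
      · simp only [Bool.not_eq_true] at hi
        have hil : l ≠ i := by
          rintro rfl
          rw [(hmemS l).mp hl] at hi
          exact absurd hi (by simp)
        rw [hi, Nat.testBit_two_pow_of_ne hil]
    have hSl : S = {l} := Finset.eq_singleton_iff_unique_mem.mpr ⟨hl, huniq⟩
    rw [hSl, Finset.prod_singleton] at hprod
    have hf1 : f = 1 := aux_fermat q f l hq hf hprod
    rw [hf1, pow_one] at hprod
    have hinf : infsigma (2 ^ e) = 2 ^ 2 ^ l + 1 := by
      rw [infsigma_prime_pow 2 e Nat.prime_two, ← hqf, hf1, pow_one, hprod]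
    exact ⟨rfl, l, he2, hinf, hprod ▸ hq⟩
  · left
    have hpodd : p % 2 = 1 := Nat.odd_iff.mp (hp.odd_of_ne_two hp2)
    have hp3 : 3 ≤ p := by
      have := hp.two_le
      omega
    have hq2 : q = 2 := by
      have h2 : 2 ∣ q ^ f := by
        refine dvd_trans ?_ (hfactor l hl)
        have hmod : p ^ 2 ^ l % 2 = 1 := by
          rw [Nat.pow_mod, hpodd, one_pow]
          rfl
        omega
      have := Nat.prime_two.dvd_of_dvd_pow h2
      exact ((Nat.prime_dvd_prime_iff_eq Nat.prime_two hq).mp this).symm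
    have hzero : ∀ j ∈ S, j = 0 := by
      intro j hj
      by_contra hj0
      obtain ⟨m, hm, hme⟩ := (Nat.dvd_prime_pow hq).mp (hfactor j hj)
      rw [hq2] at hme
      have hj1 : 1 ≤ j := by omega
      set x := p ^ 2 ^ (j - 1) with hx
      have hxodd : x % 2 = 1 := by rw [hx, Nat.pow_mod, hpodd, one_pow]; rfl
      have hx3 : 3 ≤ x :=
        le_trans hp3 (Nat.le_self_pow (by positivity) p)
      have hsq : x * x + 1 = 2 ^ m := by
        rw [hx, ← pow_add, ← hme]
        congr 2
        rw [← two_mul, ← pow_succ']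
        congr 1
        omega
      have hm2 : 2 ≤ m := by
        have h9 : 9 ≤ x * x := Nat.mul_le_mul hx3 hx3
        by_contra hcon
        interval_cases m <;> omega
      have h4 : (4:ℕ) ∣ 2 ^ m := by
        have : (2:ℕ) ^ 2 ∣ 2 ^ m := pow_dvd_pow 2 hm2
        simpa using this
      obtain ⟨c, hc⟩ := h4
      obtain ⟨t, ht⟩ : ∃ t, x = 2 * t + 1 := ⟨x / 2, by omega⟩
      have h1 : 4 * (t * t) + 4 * t + 2 = 2 ^ m := by
        rw [← hsq, ht]; ring
      obtain ⟨u, hu⟩ : ∃ u, t * t = u := ⟨_, rfl⟩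
      rw [hu] at h1
      omega
    have h0S : (0:ℕ) ∈ S := (hzero l hl) ▸ hl
    have he1 : e = 1 := by
      apply Nat.eq_of_testBit_eq
      intro i
      by_cases hi : e.testBit i = true
      · have : i = 0 := hzero i ((hmemS i).mpr hi)
        subst this
        rw [hi]
        exact (Nat.testBit_two_pow_self (n := 0)).symm
      · simp only [Bool.not_eq_true] at hi
        have hi0 : (0:ℕ) ≠ i := by
          rintro rfl
          rw [(hmemS 0).mp h0S] at hi
          exact absurd hi (by simp)
        rw [hi]
        exact (Nat.testBit_two_pow_of_ne hi0).symm
    have hS0 : S = {0} := Finset.eq_singleton_iff_unique_mem.mpr ⟨h0S, hzero⟩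
    rw [hS0, Finset.prod_singleton] at hprod
    simp only [pow_zero, pow_one] at hprod
    rw [hq2] at hprod
    exact ⟨he1, f, hprod.symm⟩
end

section
/- For every e ≥ 1, σ_∞(2^e) has at least l(e) distinct prime factors, where l(e) is the number of 1's in the binary expansion of e. -/
lemma sum_digits_eq_sum_testBit (k : ℕ) : ∀ n : ℕ, n < 2 ^ k →
    (Nat.digits 2 n).sum = ∑ j ∈ Finset.range k, if n.testBit j then 1 else 0 := by
  induction k with
  | zero => intro n hn; interval_cases n; simp
  | succ k ih =>
    intro n hn
    rcases Nat.eq_zero_or_pos n with rfl | hpos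
    · simp
    rw [Nat.digits_def' (by norm_num) hpos]
    have hdiv : n / 2 < 2 ^ k := by
      rw [Nat.div_lt_iff_lt_mul (by norm_num), ← pow_succ]; exact hn
    rw [Finset.sum_range_succ']
    simp only [Nat.testBit_succ, Nat.testBit_zero]
    rw [List.sum_cons, ih (n / 2) hdiv]
    rcases Nat.mod_two_eq_zero_or_one n with h | h <;> simp [h] <;> omega

theorem infsigma_two_pow_omega (e : ℕ) (he : 1 ≤ e) :
    (Nat.digits 2 e).sum ≤ (infsigma (2 ^ e)).primeFactors.card := by
  classical
  have h2 : Nat.Prime 2 := Nat.prime_two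
  -- compute infsigma (2^e)
  have hfact : infsigma (2 ^ e)
      = ∏ j ∈ (Finset.range e).filter (fun j => e.testBit j = true), Nat.fermatNumber j := by
    rw [infsigma, h2.factorization_pow, Finsupp.prod_single_index (by simp),
      ]
    simp only [Finset.prod_filter]
    rfl
  set S := (Finset.range e).filter (fun j => e.testBit j = true) with hS
  set N := ∏ j ∈ S, Nat.fermatNumber j with hN
  have hNpos : 0 < N := Finset.prod_pos fun j _ => by
    have := Nat.three_le_fermatNumber j; omega
  -- digit sum equals card S
  have hsum : (Nat.digits 2 e).sum = S.card := by
    rw [sum_digits_eq_sum_testBit e e (Nat.lt_two_pow_self (n := e)), hS, Finset.card_filter]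
  rw [hsum, hfact]
  -- injection j ↦ minFac (fermatNumber j)
  apply Finset.card_le_card_of_injOn (fun j => (Nat.fermatNumber j).minFac)
  · intro j hj
    have hne1 : Nat.fermatNumber j ≠ 1 := Nat.fermatNumber_ne_one j
    have hp : ((Nat.fermatNumber j).minFac).Prime := Nat.minFac_prime hne1
    rw [Finset.mem_coe, Nat.mem_primeFactors]
    refine ⟨hp, ?_, hNpos.ne'⟩
    exact (Nat.minFac_dvd _).trans (Finset.dvd_prod_of_mem _ hj)
  · intro i hi j hj hij
    by_contra hne
    have hcop := Nat.coprime_fermatNumber_fermatNumber hne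
    have hdi : (Nat.fermatNumber i).minFac ∣ Nat.fermatNumber i := Nat.minFac_dvd _
    have hij' : (Nat.fermatNumber i).minFac = (Nat.fermatNumber j).minFac := hij
    have hdj : (Nat.fermatNumber i).minFac ∣ Nat.fermatNumber j := hij' ▸ Nat.minFac_dvd _
    have h1 : (Nat.fermatNumber i).minFac = 1 :=
      Nat.dvd_one.mp (hcop ▸ Nat.dvd_gcd hdi hdj)
    exact (Nat.minFac_prime (Nat.fermatNumber_ne_one i)).one_lt.ne' h1
end

section
/- If p and q are odd primes and k > 0 is an integer satisfying p^{2^k} + 1 = 2q and 2^{2^{k+1}} ≡ 1 (mod q), then p = 3, q = 5, and k = 1. -/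
lemma aux_growth : ∀ n, 4 ≤ n → 2 * 2 ^ n + 1 < 3 ^ n := by
  intro n hn
  induction n with
  | zero => omega
  | succ m ih =>
    rcases Nat.lt_or_ge m 4 with hm | hm
    · interval_cases m <;> norm_num at *
    · have h1 := ih (by omega)
      have h2 : 1 ≤ (2:ℕ) ^ m := Nat.one_le_two_pow
      rw [pow_succ, pow_succ]
      nlinarith

theorem pow_two_pow_add_one_eq_two_mul_prime (p q k : ℕ) (hp : p.Prime) (hq : q.Prime)
    (hpodd : Odd p) (hqodd : Odd q) (hk : 0 < k)
    (h : p ^ 2 ^ k + 1 = 2 * q) (hmod : 2 ^ 2 ^ (k + 1) ≡ 1 [MOD q]) :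
    p = 3 ∧ q = 5 ∧ k = 1 := by
  have hp3 : 3 ≤ p := by
    have h2 := hp.two_le
    rcases Nat.lt_or_ge p 3 with h' | h'
    · interval_cases p
      exact absurd hpodd (by decide)
    · exact h'
  -- q divides 2^(2^(k+1)) - 1
  have h1le : 1 ≤ 2 ^ 2 ^ (k + 1) := Nat.one_le_two_pow
  have hdvd : q ∣ 2 ^ 2 ^ (k + 1) - 1 := (Nat.modEq_iff_dvd' h1le).mp hmod.symm
  -- factor: 2^(2^(k+1)) - 1 = (2^(2^k) - 1) * (2^(2^k) + 1)
  have hfac : 2 ^ 2 ^ (k + 1) - 1 = (2 ^ 2 ^ k - 1) * (2 ^ 2 ^ k + 1) := by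
    obtain ⟨b, hb⟩ := Nat.exists_eq_add_of_le (Nat.one_le_two_pow : 1 ≤ 2 ^ 2 ^ k)
    have h2 : 2 ^ 2 ^ (k + 1) = 2 ^ 2 ^ k * 2 ^ 2 ^ k := by
      rw [← pow_add]; congr 1; rw [pow_succ]; ring
    rw [h2, hb, Nat.add_sub_cancel_left]
    have : (1 + b) * (1 + b) = b * (1 + b + 1) + 1 := by ring
    omega
  rw [hfac] at hdvd
  have hbig : 4 ≤ 2 ^ 2 ^ k := by
    calc (4:ℕ) = 2 ^ 2 := by norm_num
    _ ≤ 2 ^ 2 ^ k := Nat.pow_le_pow_right (by norm_num)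
        (by calc 2 = 2 ^ 1 := by norm_num
            _ ≤ 2 ^ k := Nat.pow_le_pow_right (by norm_num) hk)
  have hqle : q ≤ 2 ^ 2 ^ k + 1 := by
    rcases hq.dvd_mul.mp hdvd with h' | h'
    · have := Nat.le_of_dvd (by omega) h'
      omega
    · exact Nat.le_of_dvd (by omega) h'
  have hpow : 3 ^ 2 ^ k ≤ p ^ 2 ^ k := Nat.pow_le_pow_left hp3 _
  -- rule out k ≥ 2
  have hk1 : k = 1 := by
    by_contra hne
    have hk2 : 2 ≤ k := by omega
    have hn4 : 4 ≤ 2 ^ k := by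
      calc 4 = 2 ^ 2 := by norm_num
      _ ≤ 2 ^ k := Nat.pow_le_pow_right (by norm_num) hk2
    have := aux_growth (2 ^ k) hn4
    omega
  subst hk1
  norm_num at h hqle hpow
  -- q ≤ 5 and 2 * q = p^2 + 1 ≥ 10
  have hq5 : q = 5 := by omega
  subst hq5
  have hp2 : p ^ 2 = 9 := by omega
  have hp' : p = 3 := by nlinarith
  exact ⟨hp', rfl, rfl⟩
end

section
/- If N is a positive integer with σ_∞(σ_∞(N)) = 2N and σ_∞(N) is either odd or a prime power, then N = 2. -/
/-- the local factor -/
def gf (p e : ℕ) : ℕ :=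
  ∏ j ∈ Finset.range e, if e.testBit j then p ^ 2 ^ j + 1 else 1

lemma infsigma_eq (n : ℕ) : infsigma n = n.factorization.prod gf := rfl

lemma gf_factor_dvd {p e j : ℕ} (h : e.testBit j = true) : p ^ 2 ^ j + 1 ∣ gf p e := by
  have h2 : 2 ^ j ≤ e := by
    by_contra hlt
    rw [Nat.testBit_eq_false_of_lt (by omega)] at h
    exact Bool.false_ne_true h
  have hj : j ∈ Finset.range e := Finset.mem_range.mpr (lt_of_lt_of_le (Nat.lt_two_pow_self (n := j)) h2)
  have := Finset.dvd_prod_of_mem (fun j => if e.testBit j then p ^ 2 ^ j + 1 else 1) hj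
  simpa [h, gf] using this

lemma gf_dvd_infsigma {p n : ℕ} (hp : p.Prime) (hpn : p ∣ n) (hn : n ≠ 0) :
    gf p (n.factorization p) ∣ infsigma n := by
  rw [infsigma_eq, Finsupp.prod]
  exact Finset.dvd_prod_of_mem _ (by
    rw [Nat.support_factorization, Nat.mem_primeFactors]
    exact ⟨hp, hpn, hn⟩)

lemma infsigma_prime_pow_s12 {p : ℕ} (hp : p.Prime) (e : ℕ) : infsigma (p ^ e) = gf p e := by
  rw [infsigma_eq, hp.factorization_pow, Finsupp.prod_single_index]
  rfl

lemma odd_gf_two (e : ℕ) : Odd (gf 2 e) := by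
  refine Finset.prod_induction _ Odd (fun a b ha hb => ha.mul hb) odd_one ?_
  intro j _
  split
  · exact Even.add_one (Nat.even_pow.mpr ⟨even_two, by positivity⟩)
  · exact odd_one

lemma odd_sq_mod_four {m : ℕ} (h : Odd m) : m ^ 2 % 4 = 1 := by
  obtain ⟨k, rfl⟩ := h
  have : (2 * k + 1) ^ 2 = 4 * (k * k + k) + 1 := by ring
  simp [this, Nat.mul_add_mod]

lemma two_pow_of_dvd_two_pow {d t : ℕ} (h : d ∣ 2 ^ t) : ∃ b, d = 2 ^ b := by
  obtain ⟨b, _, rfl⟩ := (Nat.dvd_prime_pow Nat.prime_two).mp h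
  exact ⟨b, rfl⟩

lemma prime_factor_mersenne {M q t : ℕ} (hM : M ≠ 0) (hq : q.Prime) (hodd : Odd q)
    (hqM : q ∣ M) (hpow : infsigma M = 2 ^ t) : ∃ a, 2 ≤ a ∧ q + 1 = 2 ^ a := by
  have hq3 : 3 ≤ q := by
    rcases hq.two_le.lt_or_eq with h | h
    · omega
    · exfalso; rw [← h] at hodd; simp [Nat.odd_iff] at hodd
  set e := M.factorization q with he
  have he1 : e ≠ 0 := (hq.factorization_pos_of_dvd hM hqM).ne'
  have hgd : gf q e ∣ 2 ^ t := hpow ▸ gf_dvd_infsigma hq hqM hM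
  have hbit : ∀ i, 1 ≤ i → e.testBit i = false := by
    intro i hi
    by_contra hset
    rw [Bool.not_eq_false] at hset
    have hd : q ^ 2 ^ i + 1 ∣ 2 ^ t := (gf_factor_dvd hset).trans hgd
    obtain ⟨b, hb⟩ := two_pow_of_dvd_two_pow hd
    -- q ^ 2 ^ i = (q ^ 2 ^ (i-1)) ^ 2
    have hsq : q ^ 2 ^ i = (q ^ 2 ^ (i - 1)) ^ 2 := by
      rw [← pow_mul]
      congr 1
      rw [← pow_succ]
      congr 1
      omega
    have hmod : (q ^ 2 ^ i) % 4 = 1 := by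
      rw [hsq]
      exact odd_sq_mod_four (hodd.pow)
    have hge : 4 ≤ q ^ 2 ^ i + 1 := by
      have : q ≤ q ^ 2 ^ i := Nat.le_self_pow (by positivity) q
      omega
    have hb2 : 2 ≤ b := by
      by_contra hb2
      interval_cases b <;> omega
    have : 2 ^ b % 4 = 0 := by
      have : 2 ^ b = 4 * 2 ^ (b - 2) := by
        rw [show (4:ℕ) = 2 ^ 2 by norm_num, ← pow_add]
        congr 1; omega
      simp [this]
    omega
  have hbit0 : e.testBit 0 = true := by
    obtain ⟨i, hi, _⟩ := Nat.exists_most_significant_bit he1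
    rcases Nat.eq_zero_or_pos i with rfl | hpos
    · exact hi
    · rw [hbit i hpos] at hi; exact absurd hi (Bool.false_ne_true)
  have hd : q + 1 ∣ 2 ^ t := by
    have := (gf_factor_dvd (p := q) hbit0).trans hgd
    simpa using this
  obtain ⟨a, ha⟩ := two_pow_of_dvd_two_pow hd
  refine ⟨a, ?_, ha⟩
  by_contra ha2
  interval_cases a <;> omega

lemma fermat_no_mersenne_factor {j q a : ℕ} (hj : 1 ≤ j) (hq : q.Prime)
    (hdvd : q ∣ 2 ^ 2 ^ j + 1) (ha : 2 ≤ a) (hqa : q + 1 = 2 ^ a) : False := by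
  have hq2 : q ≠ 2 := by
    rintro rfl
    have : Odd (2 ^ 2 ^ j + 1) := Even.add_one (Nat.even_pow.mpr ⟨even_two, by positivity⟩)
    rw [Nat.odd_iff] at this
    omega
  have hjeven : Even (2 ^ j) := Nat.even_pow.mpr ⟨even_two, by omega⟩
  have hq3 : q ≠ 3 := by
    rintro rfl
    have h3 : ((2 ^ 2 ^ j + 1 : ℕ) : ZMod 3) = 0 := by
      rw [ZMod.natCast_eq_zero_iff]; exact hdvd
    push_cast at h3
    rw [show (2 : ZMod 3) = -1 by decide, hjeven.neg_one_pow] at h3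
    exact absurd h3 (by decide)
  have haodd : Odd a := by
    rw [Nat.odd_iff]
    by_contra hev
    have hae : a % 2 = 0 := by omega
    obtain ⟨b, rfl⟩ : ∃ b, a = 2 * b := ⟨a / 2, by omega⟩
    have h3q : ((q : ℕ) : ZMod 3) = 0 := by
      have : ((q + 1 : ℕ) : ZMod 3) = ((2 ^ (2 * b) : ℕ) : ZMod 3) := by rw [hqa]
      push_cast at this
      rw [pow_mul, show (2 : ZMod 3) ^ 2 = 1 by decide, one_pow] at this
      have h2 : (q : ZMod 3) + 1 = 1 := this
      linear_combination h2
    rw [ZMod.natCast_eq_zero_iff] at h3q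
    exact hq3 ((Nat.prime_dvd_prime_iff_eq Nat.prime_three hq).mp h3q).symm
  -- work in ZMod q
  have hx1 : (2 : ZMod q) ^ 2 ^ j = -1 := by
    have h0 : ((2 ^ 2 ^ j + 1 : ℕ) : ZMod q) = 0 := by
      rw [ZMod.natCast_eq_zero_iff]; exact hdvd
    push_cast at h0
    linear_combination h0
  have hx2 : (2 : ZMod q) ^ a = 1 := by
    have : ((q + 1 : ℕ) : ZMod q) = ((2 ^ a : ℕ) : ZMod q) := by rw [hqa]
    push_cast at this
    rw [ZMod.natCast_self] at this
    linear_combination -this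
  have hcontr : (-1 : ZMod q) = 1 := by
    calc (-1 : ZMod q) = ((2 : ZMod q) ^ 2 ^ j) ^ a := by rw [hx1, haodd.neg_one_pow]
    _ = ((2 : ZMod q) ^ a) ^ 2 ^ j := by rw [← pow_mul, mul_comm, pow_mul]
    _ = 1 := by rw [hx2, one_pow]
  have : ((2 : ℕ) : ZMod q) = 0 := by push_cast; linear_combination -hcontr
  rw [ZMod.natCast_eq_zero_iff] at this
  have := (Nat.prime_dvd_prime_iff_eq hq Nat.prime_two).mp this
  exact hq2 this

lemma infsigma_one : infsigma 1 = 1 := by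
  simp [infsigma_eq]

lemma main_odd (N : ℕ) (hN : 0 < N) (h : infsigma (infsigma N) = 2 * N)
    (hodd : Odd (infsigma N)) : N = 2 := by
  set M := infsigma N with hMdef
  have hN1 : N ≠ 1 := by
    rintro rfl
    rw [hMdef] at h
    rw [infsigma_one, infsigma_one] at h
    omega
  have hN0 : N ≠ 0 := hN.ne'
  have hsupp : ∀ p ∈ N.factorization.support, p = 2 := by
    intro p hp
    rw [Nat.support_factorization, Nat.mem_primeFactors] at hp
    obtain ⟨hpp, hpN, -⟩ := hp
    by_contra hp2
    have hpodd : Odd p := hpp.odd_of_ne_two hp2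
    set ep := N.factorization p with hep
    have hep1 : ep ≠ 0 := (hpp.factorization_pos_of_dvd hN0 hpN).ne'
    obtain ⟨i, hi, -⟩ := Nat.exists_most_significant_bit hep1
    have hdvd : p ^ 2 ^ i + 1 ∣ M := (gf_factor_dvd hi).trans (gf_dvd_infsigma hpp hpN hN0)
    have h2M : 2 ∣ M := dvd_trans ((hpodd.pow).add_one).two_dvd hdvd
    rw [Nat.odd_iff] at hodd
    obtain ⟨c, hc⟩ := h2M
    omega
  -- N = 2 ^ e
  have h2mem : 2 ∈ N.factorization.support := by
    have hne : N.factorization.support.Nonempty := by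
      rw [Nat.support_factorization]
      exact (Nat.nonempty_primeFactors).mpr (by omega)
    obtain ⟨p, hp⟩ := hne
    rwa [hsupp p hp] at hp
  have hsuppeq : N.factorization.support = {2} := by
    apply Finset.eq_singleton_iff_unique_mem.mpr
    exact ⟨h2mem, hsupp⟩
  set e := N.factorization 2 with hedef
  have hNe : N = 2 ^ e := by
    conv_lhs => rw [← Nat.factorization_prod_pow_eq_self hN0]
    rw [Finsupp.prod, hsuppeq, Finset.prod_singleton]
  have he1 : e ≠ 0 := by
    have := Finsupp.mem_support_iff.mp h2mem
    omega
  have hM2 : M = gf 2 e := by rw [hMdef]; conv_lhs => rw [hNe]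
                              exact infsigma_prime_pow_s12 Nat.prime_two e
  have hM0 : M ≠ 0 := by
    rw [Nat.odd_iff] at hodd; omega
  have ht : infsigma M = 2 ^ (e + 1) := by
    rw [h, hNe, pow_succ, mul_comm]
  have hbits : ∀ j, 1 ≤ j → e.testBit j = false := by
    intro j hj
    by_contra hset
    rw [Bool.not_eq_false] at hset
    have hFdvd : 2 ^ 2 ^ j + 1 ∣ M := by rw [hM2]; exact gf_factor_dvd hset
    set q := (2 ^ 2 ^ j + 1).minFac with hqdef
    have hF1 : 2 ^ 2 ^ j + 1 ≠ 1 := by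
      have : 0 < 2 ^ 2 ^ j := pow_pos (by norm_num) _
      omega
    have hqp : q.Prime := Nat.minFac_prime hF1
    have hqF : q ∣ 2 ^ 2 ^ j + 1 := Nat.minFac_dvd _
    have hFodd : Odd (2 ^ 2 ^ j + 1) :=
      Even.add_one (Nat.even_pow.mpr ⟨even_two, by positivity⟩)
    have hqodd : Odd q := by
      rcases hqp.eq_two_or_odd' with h2 | hodd'
      · exfalso
        rw [Nat.odd_iff] at hFodd
        obtain ⟨c, hc⟩ := hqF
        rw [h2] at hc
        omega
      · exact hodd'
    obtain ⟨a, ha2, hqa⟩ :=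
      prime_factor_mersenne hM0 hqp hqodd (hqF.trans hFdvd) ht
    exact fermat_no_mersenne_factor hj hqp hqF ha2 hqa
  -- conclude e = 1
  have he : e = 1 := by
    apply Nat.eq_of_testBit_eq
    intro i
    cases i with
    | zero =>
      obtain ⟨i, hi, -⟩ := Nat.exists_most_significant_bit he1
      rcases Nat.eq_zero_or_pos i with rfl | hpos
      · rw [hi]; decide
      · rw [hbits i hpos] at hi; exact absurd hi Bool.false_ne_true
    | succ k =>
      rw [hbits (k + 1) (by omega)]
      refine (Nat.testBit_eq_false_of_lt ?_).symm
      have : 2 ^ 1 ≤ 2 ^ (k + 1) := Nat.pow_le_pow_right (by norm_num) (by omega)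
      omega
  rw [hNe, he, pow_one]

theorem superperfect_of_infsigma_odd_or_prime_pow (N : ℕ) (hN : 0 < N)
    (h : infsigma (infsigma N) = 2 * N)
    (hcase : Odd (infsigma N) ∨ IsPrimePow (infsigma N)) : N = 2 := by
  rcases hcase with hodd | hpp
  · exact main_odd N hN h hodd
  · by_cases hodd : Odd (infsigma N)
    · exact main_odd N hN h hodd
    · exfalso
      obtain ⟨p, k, hp, hk, hpk⟩ := hpp
      rw [← Nat.prime_iff] at hp
      have h2M : 2 ∣ infsigma N := by
        rw [Nat.odd_iff] at hodd
        omega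
      have hp2 : p = 2 := by
        have : (2 : ℕ) ∣ p ^ k := hpk ▸ h2M
        have := Nat.Prime.dvd_of_dvd_pow Nat.prime_two this
        exact ((Nat.prime_dvd_prime_iff_eq Nat.prime_two hp).mp this).symm
      subst hp2
      have : infsigma (infsigma N) = gf 2 k := by
        rw [← hpk]; exact infsigma_prime_pow_s12 Nat.prime_two k
      have hoddM := odd_gf_two k
      rw [← this, h, Nat.odd_iff] at hoddM
      omega
end

section
/- If N is a positive integer with σ_∞(σ_∞(N)) = 2N and σ_∞(N) = 2q for some odd prime q, then N = 9 (and q = 5). -/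
namespace InfsigmaAux

/-- A divisor of `2 * q` that is at least `3` is at least `q`. -/
lemma q_le_of_dvd {q d : ℕ} (hq : q.Prime) (hd : d ∣ 2 * q) (h3 : 3 ≤ d) : q ≤ d := by
  by_cases hqd : q ∣ d
  · exact Nat.le_of_dvd (by omega) hqd
  · have hcop : Nat.Coprime d q := ((Nat.Prime.coprime_iff_not_dvd hq).mpr hqd).symm
    have := Nat.le_of_dvd (by norm_num) (hcop.dvd_of_dvd_mul_right hd)
    omega

/-- A product of naturals, each equal to `1` or `≥ 3`, equals `2 * q` for an odd
prime `q` only if exactly one factor is nontrivial, equal to `2 * q`. -/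
lemma key {ι : Type*} [DecidableEq ι] {s : Finset ι} {g : ι → ℕ} {q : ℕ}
    (hq : q.Prime) (hqodd : Odd q)
    (hg : ∀ i ∈ s, g i = 1 ∨ 3 ≤ g i)
    (h : ∏ i ∈ s, g i = 2 * q) :
    ∃ i ∈ s, g i = 2 * q ∧ ∀ j ∈ s, j ≠ i → g j = 1 := by
  have hq3 : 3 ≤ q := by
    rcases hqodd with ⟨k, hk⟩
    have := hq.two_le
    omega
  have hne : ∃ i ∈ s, g i ≠ 1 := by
    by_contra hc
    push_neg at hc
    have : ∏ i ∈ s, g i = 1 := Finset.prod_eq_one hc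
    omega
  obtain ⟨i, his, hgi⟩ := hne
  have h3i : 3 ≤ g i := by rcases hg i his with h1 | h1 <;> omega
  have hothers : ∀ j ∈ s, j ≠ i → g j = 1 := by
    intro j hjs hji
    by_contra hgj
    have h3j : 3 ≤ g j := by rcases hg j hjs with h1 | h1 <;> omega
    have hdi : g i ∣ 2 * q := h ▸ Finset.dvd_prod_of_mem g his
    have hdj : g j ∣ 2 * q := h ▸ Finset.dvd_prod_of_mem g hjs
    have hqi := q_le_of_dvd hq hdi h3i
    have hqj := q_le_of_dvd hq hdj h3j
    have hsub : ({j, i} : Finset ι) ⊆ s := by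
      intro x hx
      simp only [Finset.mem_insert, Finset.mem_singleton] at hx
      rcases hx with rfl | rfl <;> assumption
    have hle : ∏ x ∈ ({j, i} : Finset ι), g x ≤ ∏ x ∈ s, g x := by
      apply Finset.prod_le_prod_of_subset_of_one_le' hsub
      intro x hx _
      rcases hg x hx with h1 | h1 <;> omega
    rw [Finset.prod_pair hji, h] at hle
    nlinarith
  refine ⟨i, his, ?_, hothers⟩
  have : ∏ x ∈ s, g x = g i :=
    Finset.prod_eq_single_of_mem i his fun j hjs hji => hothers j hjs hji
  omega

lemma mem_range_of_testBit {e j : ℕ} (hj : e.testBit j = true) : j ∈ Finset.range e := by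
  rw [Finset.mem_range]
  by_contra hc
  push_neg at hc
  have h2 : e < 2 ^ j := lt_of_le_of_lt hc (Nat.lt_two_pow_self (n := j))
  rw [Nat.testBit_lt_two_pow h2] at hj
  simp at hj

lemma three_le_F {p e : ℕ} (hp : 2 ≤ p) (he : e ≠ 0) :
    3 ≤ ∏ j ∈ Finset.range e, if e.testBit j then p ^ 2 ^ j + 1 else 1 := by
  obtain ⟨i, hi⟩ := Nat.exists_testBit_of_ne_zero he
  calc 3 ≤ (if e.testBit i then p ^ 2 ^ i + 1 else 1) := by
        rw [hi, if_pos rfl]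
        have : 2 ^ 1 ≤ p ^ 2 ^ i := by
          calc 2 ^ 1 ≤ 2 ^ 2 ^ i := Nat.pow_le_pow_right (by norm_num) (Nat.one_le_two_pow)
          _ ≤ p ^ 2 ^ i := Nat.pow_le_pow_left hp _
        omega
    _ ≤ ∏ j ∈ Finset.range e, if e.testBit j then p ^ 2 ^ j + 1 else 1 := by
        apply Finset.single_le_prod' ?_ (mem_range_of_testBit hi)
        intro j _
        split
        · omega
        · exact le_refl 1

lemma pow_struct {p e q : ℕ} (hp : 2 ≤ p) (hq : q.Prime) (hqodd : Odd q)
    (h : (∏ j ∈ Finset.range e, if e.testBit j then p ^ 2 ^ j + 1 else 1) = 2 * q) :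
    ∃ j, e = 2 ^ j ∧ p ^ 2 ^ j + 1 = 2 * q := by
  have hq3 : 3 ≤ q := by
    rcases hqodd with ⟨k, hk⟩; have := hq.two_le; omega
  have hg : ∀ j ∈ Finset.range e,
      (if e.testBit j then p ^ 2 ^ j + 1 else 1) = 1 ∨
      3 ≤ (if e.testBit j then p ^ 2 ^ j + 1 else 1) := by
    intro j _
    split
    · right
      have : 2 ^ 1 ≤ p ^ 2 ^ j := by
        calc 2 ^ 1 ≤ 2 ^ 2 ^ j := Nat.pow_le_pow_right (by norm_num) (Nat.one_le_two_pow)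
        _ ≤ p ^ 2 ^ j := Nat.pow_le_pow_left hp _
      omega
    · left; rfl
  obtain ⟨j, hjmem, hgj, hothers⟩ := key hq hqodd hg h
  have hbit : e.testBit j = true := by
    by_contra hc
    simp only [Bool.not_eq_true] at hc
    rw [if_neg (by simp [hc])] at hgj
    omega
  rw [if_pos hbit] at hgj
  refine ⟨j, ?_, hgj⟩
  apply Nat.eq_of_testBit_eq
  intro k
  rcases eq_or_ne k j with rfl | hkj
  · rw [hbit, Nat.testBit_two_pow_self]
  · rw [Nat.testBit_two_pow_of_ne (Ne.symm hkj)]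
    by_cases hk : k ∈ Finset.range e
    · have h1 := hothers k hk hkj
      by_contra hc
      simp only [Bool.not_eq_false] at hc
      rw [if_pos hc] at h1
      have : 2 ^ 1 ≤ p ^ 2 ^ k := by
        calc 2 ^ 1 ≤ 2 ^ 2 ^ k := Nat.pow_le_pow_right (by norm_num) (Nat.one_le_two_pow)
        _ ≤ p ^ 2 ^ k := Nat.pow_le_pow_left hp _
      omega
    · by_contra hc
      simp only [Bool.not_eq_false] at hc
      exact hk (mem_range_of_testBit hc)

lemma infsigma_two_mul_prime {q : ℕ} (hq : q.Prime) (hq2 : q ≠ 2) :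
    infsigma (2 * q) = 3 * (q + 1) := by
  have h2 : (2 : ℕ).Prime := Nat.prime_two
  unfold infsigma
  rw [Nat.factorization_mul (by norm_num) hq.ne_zero, h2.factorization, hq.factorization]
  rw [Finsupp.prod_add_index_of_disjoint]
  · rw [Finsupp.prod_single_index (by simp), Finsupp.prod_single_index (by simp)]
    norm_num [Finset.prod_range_one]
  · simp [Finsupp.support_single_ne_zero, Ne.symm hq2, hq2]

end InfsigmaAux

theorem superperfect_of_infsigma_eq_two_mul_prime (N q : ℕ) (hN : 0 < N)
    (hq : q.Prime) (hqodd : Odd q) (hNq : infsigma N = 2 * q)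
    (h : infsigma (infsigma N) = 2 * N) : N = 9 ∧ q = 5 := by
  have hq2 : q ≠ 2 := by
    rintro rfl
    exact (Nat.not_odd_iff_even.mpr (by norm_num)) hqodd
  -- `infsigma N` as a product over prime factors
  set F : ℕ → ℕ → ℕ := fun p e =>
    ∏ j ∈ Finset.range e, if e.testBit j then p ^ 2 ^ j + 1 else 1 with hF
  have hprod : ∏ p ∈ N.factorization.support, F p (N.factorization p) = 2 * q := by
    rw [← hNq]; rfl
  have hg : ∀ p ∈ N.factorization.support,
      F p (N.factorization p) = 1 ∨ 3 ≤ F p (N.factorization p) := by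
    intro p hp
    right
    have hpp : p.Prime := Nat.prime_of_mem_primeFactors (by rwa [Nat.support_factorization] at hp)
    have hep : N.factorization p ≠ 0 := Finsupp.mem_support_iff.mp hp
    exact InfsigmaAux.three_le_F hpp.two_le hep
  obtain ⟨p, hps, hgp, hothers⟩ := InfsigmaAux.key hq hqodd hg hprod
  have hpp : p.Prime := Nat.prime_of_mem_primeFactors (by rwa [Nat.support_factorization] at hps)
  -- the support is exactly {p}
  have hsup : N.factorization.support = {p} := by
    apply Finset.eq_singleton_iff_unique_mem.mpr
    refine ⟨hps, ?_⟩
    intro x hx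
    by_contra hxp
    have h1 := hothers x hx hxp
    have hep : N.factorization x ≠ 0 := Finsupp.mem_support_iff.mp hx
    have hxpr : x.Prime :=
      Nat.prime_of_mem_primeFactors (by rwa [Nat.support_factorization] at hx)
    have h3 : 3 ≤ F x (N.factorization x) := InfsigmaAux.three_le_F hxpr.two_le hep
    omega
  -- hence N is a prime power
  have hNpow : N = p ^ N.factorization p := by
    conv_lhs => rw [← Nat.factorization_prod_pow_eq_self hN.ne']
    rw [Finsupp.prod, hsup, Finset.prod_singleton]
  -- structure of the exponent
  obtain ⟨j, hej, hpj⟩ := InfsigmaAux.pow_struct hpp.two_le hq hqodd hgp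
  have hNval : N + 1 = 2 * q := by
    rw [hNpow, hej]
    exact hpj
  -- use the second equation
  rw [hNq, InfsigmaAux.infsigma_two_mul_prime hq hq2] at h
  omega
end

section
/- There is no positive integer N satisfying σ_∞(σ_∞(N)) = 2N with σ_∞(N) = 2^f q^{2^l}, where q is an odd prime, f ≥ 1, and l > 0. -/
private def gfun (p e : ℕ) : ℕ :=
  ∏ j ∈ Finset.range e, if e.testBit j then p ^ 2 ^ j + 1 else 1

private lemma infsigma_eq_s15 (n : ℕ) :
    infsigma n = ∏ p ∈ n.primeFactors, gfun p (n.factorization p) := by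
  rw [infsigma, Finsupp.prod, Nat.support_factorization]
  rfl

private lemma sum_ite_testBit : ∀ (k n : ℕ), n < 2 ^ k →
    (∑ j ∈ Finset.range k, if n.testBit j then 2 ^ j else 0) = n := by
  intro k
  induction k with
  | zero => intro n hn; interval_cases n; simp
  | succ k ih =>
    intro n hn
    rw [Finset.sum_range_succ']
    have h1 : ∀ j : ℕ, (if n.testBit (j + 1) then 2 ^ (j + 1) else 0)
        = 2 * (if (n / 2).testBit j then 2 ^ j else 0) := by
      intro j
      rw [Nat.testBit_add_one]
      split <;> ring
    simp only [h1]
    rw [← Finset.mul_sum, ih (n / 2) (by have := pow_succ 2 k; omega)]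
    have h0 : (if n.testBit 0 then 2 ^ 0 else 0) = n % 2 := by
      rw [Nat.testBit_zero]
      rcases Nat.mod_two_eq_zero_or_one n with h | h <;> simp [h]
    rw [h0]; omega

private lemma sum_testBit (n : ℕ) :
    (∑ j ∈ Finset.range n, if n.testBit j then 2 ^ j else 0) = n :=
  sum_ite_testBit n n (Nat.lt_two_pow_self (n := n))

private lemma bits_sum (n : ℕ) :
    (∑ j ∈ (Finset.range n).filter (fun j => n.testBit j), 2 ^ j) = n := by
  rw [Finset.sum_filter]; exact sum_testBit n

private lemma gfun_eq_filter (p e : ℕ) :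
    gfun p e = ∏ j ∈ (Finset.range e).filter (fun j => e.testBit j), (p ^ 2 ^ j + 1) := by
  rw [gfun, Finset.prod_filter]

private lemma filter_two_pow (j : ℕ) :
    (Finset.range (2 ^ j)).filter (fun x => (2 ^ j : ℕ).testBit x) = {j} := by
  ext x
  simp only [Finset.mem_filter, Finset.mem_range, Finset.mem_singleton]
  constructor
  · rintro ⟨hx, hb⟩
    by_contra hne
    rw [Nat.testBit_two_pow_of_ne (fun h => hne h.symm)] at hb
    exact Bool.false_ne_true hb
  · rintro rfl
    exact ⟨Nat.lt_two_pow_self, Nat.testBit_two_pow_self⟩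

private lemma gfun_two_pow (p j : ℕ) : gfun p (2 ^ j) = p ^ 2 ^ j + 1 := by
  rw [gfun_eq_filter, filter_two_pow, Finset.prod_singleton]

private lemma gfun_one (p : ℕ) : gfun p 1 = p + 1 := by
  have := gfun_two_pow p 0
  simpa using this

private lemma infsigma_two_primes {p r a c : ℕ} (hp : p.Prime) (hr : r.Prime)
    (hne : p ≠ r) (ha : a ≠ 0) (hc : c ≠ 0) :
    infsigma (p ^ a * r ^ c) = gfun p a * gfun r c := by
  rw [infsigma, Nat.factorization_mul (pow_ne_zero a hp.pos.ne') (pow_ne_zero c hr.pos.ne'),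
    hp.factorization_pow, hr.factorization_pow]
  rw [Finsupp.prod_add_index_of_disjoint]
  · rw [Finsupp.prod_single_index (by simp), Finsupp.prod_single_index (by simp)]
    rfl
  · rw [Finsupp.support_single_ne_zero _ ha, Finsupp.support_single_ne_zero _ hc]
    simp [hne, Ne.symm hne]

private lemma odd_sq_mod_four_s15 {y : ℕ} (hy : y % 2 = 1) : y ^ 2 % 4 = 1 := by
  obtain ⟨k, hk⟩ : ∃ k, y = 2 * k + 1 := ⟨y / 2, by omega⟩
  subst hk
  have h : (2 * k + 1) ^ 2 = 4 * (k * k + k) + 1 := by ring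
  omega

private lemma pow_odd_mod_two {p m : ℕ} (hp : p % 2 = 1) : p ^ m % 2 = 1 := by
  rw [Nat.pow_mod, hp, one_pow]; rfl

private lemma pow_two_pow_mod_four {p j : ℕ} (hp : p % 2 = 1)
    (h : p % 4 = 1 ∨ 1 ≤ j) : p ^ 2 ^ j % 4 = 1 := by
  rcases Nat.eq_zero_or_pos j with rfl | hj
  · rcases h with h | h
    · simpa using h
    · omega
  · have h2 : (2:ℕ) ^ j = 2 ^ (j - 1) * 2 := by
      rw [← pow_succ]; congr 1; omega
    rw [h2, pow_mul]
    exact odd_sq_mod_four_s15 (pow_odd_mod_two hp)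

private lemma prime_mod4_of_dvd_sq_add_one {p x : ℕ} (hp : p.Prime) (hp2 : p ≠ 2)
    (h : p ∣ x ^ 2 + 1) : p % 4 = 1 := by
  haveI := Fact.mk hp
  have hx : ((x : ZMod p)) ^ 2 = -1 := by
    have h0 : ((x ^ 2 + 1 : ℕ) : ZMod p) = 0 := (ZMod.natCast_eq_zero_iff _ _).mpr h
    push_cast at h0
    linear_combination h0
  have h4 : p % 4 ≠ 3 := ZMod.exists_sq_eq_neg_one_iff.mp ⟨(x : ZMod p), by rw [← hx]; ring⟩
  have h2 := hp.two_le
  have hodd : p % 2 = 1 := Nat.odd_iff.mp (hp.odd_of_ne_two hp2)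
  omega

private lemma no_two_bits {q p j j' b b' : ℕ} (hq : q.Prime) (hq3 : 3 ≤ q) (hlt : j < j')
    (h1 : p ^ 2 ^ j + 1 = 2 * q ^ b) (hb : b ≠ 0)
    (h2 : p ^ 2 ^ j' + 1 = 2 * q ^ b') (hb' : b' ≠ 0) : False := by
  haveI := Fact.mk hq
  have cast1 : ((p : ZMod q)) ^ 2 ^ j = -1 := by
    have h0 := congrArg (fun n : ℕ => (n : ZMod q)) h1
    push_cast at h0
    rw [ZMod.natCast_self, zero_pow hb] at h0
    linear_combination h0
  have cast2 : ((p : ZMod q)) ^ 2 ^ j' = -1 := by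
    have h0 := congrArg (fun n : ℕ => (n : ZMod q)) h2
    push_cast at h0
    rw [ZMod.natCast_self, zero_pow hb'] at h0
    linear_combination h0
  have hone : ((p : ZMod q)) ^ 2 ^ j' = 1 := by
    have h2j : (2:ℕ) ^ j' = 2 ^ j * 2 ^ (j' - j) := by
      rw [← pow_add]; congr 1; omega
    rw [h2j, pow_mul, cast1]
    exact Even.neg_one_pow (Nat.even_pow.mpr ⟨even_two, by omega⟩)
  rw [cast2] at hone
  have h20 : ((2 : ℕ) : ZMod q) = 0 := by push_cast; linear_combination -hone
  have hdvd : q ∣ 2 := (ZMod.natCast_eq_zero_iff _ _).mp h20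
  have := Nat.le_of_dvd (by norm_num) hdvd
  omega

private lemma factor_is_two_q_pow {q f B : ℕ} (hq : q.Prime) (hq2 : q ≠ 2) {F : ℕ}
    (hF4 : F % 4 = 2) (hF : 2 < F) (hdvd : F ∣ 2 ^ f * q ^ B) :
    ∃ b, b ≠ 0 ∧ F = 2 * q ^ b := by
  set c := F / 2 with hc
  have hFc : F = 2 * c := by omega
  have hcodd : c % 2 = 1 := by omega
  have hc2 : 2 ≤ c := by omega
  have hcq : ∀ {d : ℕ}, d.Prime → d ∣ c → d = q := by
    intro d hd hdc
    have hcF : c ∣ F := ⟨2, by omega⟩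
    have hdF : d ∣ 2 ^ f * q ^ B := (hdc.trans hcF).trans hdvd
    rcases (Nat.Prime.dvd_mul hd).mp hdF with h | h
    · have hd2 : d = 2 := (Nat.prime_dvd_prime_iff_eq hd Nat.prime_two).mp (hd.dvd_of_dvd_pow h)
      subst hd2
      obtain ⟨k, hk⟩ := hdc
      omega
    · exact (Nat.prime_dvd_prime_iff_eq hd hq).mp (hd.dvd_of_dvd_pow h)
  have hcpow := Nat.eq_prime_pow_of_unique_prime_dvd (by omega : c ≠ 0) hcq
  refine ⟨c.primeFactorsList.length, ?_, by omega⟩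
  intro hlen
  rw [hlen, pow_zero] at hcpow
  omega

private lemma sum_range_two_pow (n : ℕ) : ∑ i ∈ Finset.range n, 2 ^ i = 2 ^ n - 1 := by
  induction n with
  | zero => simp
  | succ n ih =>
    rw [Finset.sum_range_succ, ih]
    have h1 : 1 ≤ 2 ^ n := Nat.one_le_two_pow
    have h2 : (2:ℕ) ^ (n + 1) = 2 ^ n * 2 := pow_succ 2 n
    omega

private lemma sfun_lt (I : Finset ℕ) (h0 : 0 ∉ I) :
    3 * ∏ i ∈ I, (2 ^ 2 ^ i + 1) < 2 ^ ((∑ i ∈ I, 2 ^ i) + 2) := by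
  induction I using Finset.induction_on_max with
  | empty => simp
  | insert a s hmax ih =>
    have ha0 : a ≠ 0 := fun h => h0 (by simp [h])
    have h0s : 0 ∉ s := fun h => h0 (Finset.mem_insert_of_mem h)
    have hans : a ∉ s := fun h => lt_irrefl a (hmax a h)
    rw [Finset.prod_insert hans, Finset.sum_insert hans]
    have ihs := ih h0s
    have hsum_le : (∑ i ∈ s, 2 ^ i) + 2 ≤ 2 ^ a := by
      have hsub : s ⊆ Finset.Ico 1 a := by
        intro x hx
        have hx0 : x ≠ 0 := fun h => h0s (h ▸ hx)
        exact Finset.mem_Ico.mpr ⟨by omega, hmax x hx⟩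
      have hle : ∑ i ∈ s, 2 ^ i ≤ ∑ i ∈ Finset.Ico 1 a, 2 ^ i :=
        Finset.sum_le_sum_of_subset hsub
      have hico : ∑ i ∈ Finset.Ico 1 a, (2:ℕ) ^ i ≤ 2 ^ a - 2 := by
        obtain ⟨a', rfl⟩ : ∃ a', a = a' + 1 := ⟨a - 1, by omega⟩
        rw [Finset.sum_Ico_eq_sum_range]
        simp only [Nat.add_sub_cancel, pow_add, pow_one]
        have hms : ∑ k ∈ Finset.range a', 2 * 2 ^ k = 2 * (2 ^ a' - 1) := by
          rw [← Finset.mul_sum, sum_range_two_pow]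
        rw [hms]
        have h1 : 1 ≤ (2:ℕ) ^ a' := Nat.one_le_two_pow
        omega
      have hA2 : 2 ≤ 2 ^ a := by
        have : (2:ℕ) ^ 1 ≤ 2 ^ a := Nat.pow_le_pow_right (by norm_num) (by omega)
        simpa using this
      omega
    set A := (2:ℕ) ^ 2 ^ a with hA
    set C := (2:ℕ) ^ ((∑ i ∈ s, 2 ^ i) + 2) with hC
    have hCA : C ≤ A := Nat.pow_le_pow_right (by norm_num) hsum_le
    have hC1 : 1 ≤ C := Nat.one_le_two_pow
    have h3P : 3 * ∏ i ∈ s, (2 ^ 2 ^ i + 1) ≤ C - 1 := by omega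
    have hgoal : (2:ℕ) ^ (2 ^ a + (∑ i ∈ s, 2 ^ i) + 2) = A * C := by
      rw [hA, hC, ← pow_add,
        show 2 ^ a + (∑ i ∈ s, 2 ^ i) + 2 = 2 ^ a + ((∑ i ∈ s, 2 ^ i) + 2) from by omega]
    rw [hgoal]
    calc 3 * ((A + 1) * ∏ i ∈ s, (2 ^ 2 ^ i + 1))
        = (A + 1) * (3 * ∏ i ∈ s, (2 ^ 2 ^ i + 1)) := by ring
      _ ≤ (A + 1) * (C - 1) := Nat.mul_le_mul_left _ h3P
      _ < A * C := by
          obtain ⟨c, hcC⟩ : ∃ c, C = c + 1 := ⟨C - 1, by omega⟩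
          have hcA : c < A := by omega
          calc (A + 1) * (C - 1) = A * c + c := by rw [hcC, Nat.add_sub_cancel]; ring
            _ < A * c + A := by omega
            _ = A * C := by rw [hcC]; ring

private lemma weier {ι : Type*} (s : Finset ι) (u : ι → ℚ)
    (h0 : ∀ i ∈ s, 0 ≤ u i) (h1 : ∀ i ∈ s, u i ≤ 1) :
    1 - ∑ i ∈ s, u i ≤ ∏ i ∈ s, (1 - u i) := by
  induction s using Finset.cons_induction with
  | empty => simp
  | cons a s ha ih =>
    rw [Finset.prod_cons, Finset.sum_cons]
    have hs0 : 0 ≤ ∑ i ∈ s, u i :=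
      Finset.sum_nonneg fun i hi => h0 i (Finset.mem_cons_of_mem hi)
    have hprod := ih (fun i hi => h0 i (Finset.mem_cons_of_mem hi))
      (fun i hi => h1 i (Finset.mem_cons_of_mem hi))
    have hpn : 0 ≤ ∏ i ∈ s, (1 - u i) :=
      Finset.prod_nonneg fun i hi => by linarith [h1 i (Finset.mem_cons_of_mem hi)]
    have hua0 := h0 a (Finset.mem_cons_self a s)
    have hua1 := h1 a (Finset.mem_cons_self a s)
    nlinarith [mul_le_mul_of_nonneg_left hprod (by linarith : (0:ℚ) ≤ 1 - u a),
      mul_nonneg hua0 hs0]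

private lemma geom_bound (S : Finset ℕ) (hS : ∀ k ∈ S, 1 ≤ k) :
    ∑ k ∈ S, ((1:ℚ) / 3) ^ k ≤ 1 / 2 := by
  classical
  set M := S.sup id with hM
  have hsub : S ⊆ Finset.Ico 1 (M + 1) := by
    intro k hk
    exact Finset.mem_Ico.mpr ⟨hS k hk, Nat.lt_succ_of_le (Finset.le_sup (f := id) hk)⟩
  have h1 : ∑ k ∈ S, ((1:ℚ) / 3) ^ k ≤ ∑ k ∈ Finset.Ico 1 (M + 1), ((1:ℚ) / 3) ^ k :=
    Finset.sum_le_sum_of_subset_of_nonneg hsub (fun i _ _ => by positivity)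
  have h2 : ∑ k ∈ Finset.Ico 1 (M + 1), ((1:ℚ) / 3) ^ k
      = (1 / 3) * ∑ i ∈ Finset.range M, ((1:ℚ) / 3) ^ i := by
    rw [Finset.sum_Ico_eq_sum_range]
    simp only [Nat.add_sub_cancel, pow_add, pow_one]
    rw [← Finset.mul_sum]
  have h3 : ∑ i ∈ Finset.range M, ((1:ℚ) / 3) ^ i ≤ 3 / 2 := by
    rw [geom_sum_eq (by norm_num)]
    have hpow : (0:ℚ) ≤ (1 / 3 : ℚ) ^ M := by positivity
    have hne : ((1:ℚ) / 3 - 1) = -2/3 := by norm_num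
    rw [hne]
    rw [div_le_iff_of_neg (by norm_num : (-2/3 : ℚ) < 0)]
    linarith
  linarith

private lemma two_q_pow_inj {q : ℕ} (hq : q.Prime) (hq2 : q ≠ 2) {a c a' c' : ℕ}
    (h : 2 ^ a * q ^ c = 2 ^ a' * q ^ c') : a = a' ∧ c = c' := by
  have key : ∀ x y : ℕ, ((2:ℕ) ^ x * q ^ y).factorization 2 = x ∧
      ((2:ℕ) ^ x * q ^ y).factorization q = y := by
    intro x y
    rw [Nat.factorization_mul (pow_ne_zero x (by norm_num)) (pow_ne_zero y hq.pos.ne'),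
      Nat.prime_two.factorization_pow, hq.factorization_pow]
    constructor
    · rw [Finsupp.add_apply, Finsupp.single_eq_same, Finsupp.single_eq_of_ne' hq2]
      omega
    · rw [Finsupp.add_apply, Finsupp.single_eq_of_ne' (Ne.symm hq2), Finsupp.single_eq_same]
      omega
  constructor
  · have := congrArg (fun n : ℕ => n.factorization 2) h
    simpa [(key a c).1, (key a' c').1] using this
  · have := congrArg (fun n : ℕ => n.factorization q) h
    simpa [(key a c).2, (key a' c').2] using this

theorem no_superperfect_infsigma_eq_two_pow_mul_prime_pow :
    ¬ ∃ (N q f l : ℕ), 0 < N ∧ q.Prime ∧ Odd q ∧ 1 ≤ f ∧ 0 < l ∧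
      infsigma N = 2 ^ f * q ^ 2 ^ l ∧ infsigma (infsigma N) = 2 * N := by
  rintro ⟨N, q, f, l, hN0, hq, hqodd, hf1, hl0, hE1, hE2⟩
  have hqm2 : q % 2 = 1 := Nat.odd_iff.mp hqodd
  have hq2 : q ≠ 2 := by omega
  have hq3 : 3 ≤ q := by have := hq.two_le; omega
  set B := 2 ^ l with hBdef
  have hB2 : 2 ≤ B := by
    have : (2:ℕ) ^ 1 ≤ 2 ^ l := Nat.pow_le_pow_right (by norm_num) hl0
    simpa [hBdef] using this
  have hBne : B ≠ 0 := by omega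
  -- Step A : compute σ∞(σ∞ N)
  have hss : infsigma (2 ^ f * q ^ B) = gfun 2 f * (q ^ B + 1) := by
    rw [infsigma_two_primes Nat.prime_two hq (Ne.symm hq2) (by omega) hBne, hBdef,
      gfun_two_pow]
  set s := gfun 2 f with hsdef
  have key : s * (q ^ B + 1) = 2 * N := by
    rw [hE1] at hE2
    rw [← hE2, ← hss]
  -- q^B is an odd square
  obtain ⟨y, hy⟩ : ∃ y, q ^ B = y ^ 2 := by
    refine ⟨q ^ 2 ^ (l - 1), ?_⟩
    rw [← pow_mul, hBdef]
    congr 1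
    rw [← pow_succ]
    congr 1; omega
  have hqBodd : q ^ B % 2 = 1 := pow_odd_mod_two hqm2
  have hyodd : y % 2 = 1 := by
    rcases Nat.mod_two_eq_zero_or_one y with h | h
    · exfalso
      have := Nat.pow_mod y 2 2
      rw [h] at this
      simp at this
      omega
    · exact h
  have hqB4 : q ^ B % 4 = 1 := by rw [hy]; exact odd_sq_mod_four_s15 hyodd
  set u := (q ^ B + 1) / 2 with hudef
  have hu2 : q ^ B + 1 = 2 * u := by omega
  have huodd : u % 2 = 1 := by omega
  have hNsu : N = s * u := by
    have h2 : 2 * (s * u) = 2 * N := by rw [← key, hu2]; ring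
    omega
  have hsodd : s % 2 = 1 := by
    rcases Nat.mod_two_eq_zero_or_one s with h | h
    · exfalso
      have h2s : (2:ℕ) ∣ s := by omega
      rw [hsdef, gfun] at h2s
      obtain ⟨j, _, hj2⟩ := Nat.prime_two.prime.exists_mem_finset_dvd h2s
      revert hj2
      split
      · intro hj2
        have h1 : 1 ≤ (2:ℕ) ^ 2 ^ j := Nat.one_le_two_pow
        have hmod : (2:ℕ) ^ 2 ^ j % 2 = 0 := by
          have : (2:ℕ) ∣ 2 ^ 2 ^ j := dvd_pow_self 2 (by positivity)
          omega
        omega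
      · intro hj2; omega
    · exact h
  have hNodd : N % 2 = 1 := by
    rw [hNsu, Nat.mul_mod, hsodd, huodd]
  have hNne : N ≠ 0 := by omega
  -- prime factors of N are 3 or ≡ 1 mod 4
  have hpf_mod : ∀ p ∈ N.primeFactors, p = 3 ∨ p % 4 = 1 := by
    intro p hp
    have hpp := Nat.prime_of_mem_primeFactors hp
    have hpd := Nat.dvd_of_mem_primeFactors hp
    have hp2 : p ≠ 2 := by
      rintro rfl
      obtain ⟨k, hk⟩ := hpd
      omega
    rw [hNsu] at hpd
    rcases (Nat.Prime.dvd_mul hpp).mp hpd with h | h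
    · rw [hsdef, gfun] at h
      obtain ⟨j, _, hpj⟩ := hpp.prime.exists_mem_finset_dvd h
      revert hpj
      split
      · intro hpj
        rcases Nat.eq_zero_or_pos j with rfl | hj
        · left
          have : p ∣ 3 := by simpa using hpj
          exact (Nat.prime_dvd_prime_iff_eq hpp (by norm_num)).mp this
        · right
          have h2 : (2:ℕ) ^ 2 ^ j = (2 ^ 2 ^ (j - 1)) ^ 2 := by
            rw [← pow_mul]
            congr 1
            rw [← pow_succ]
            congr 1; omega
          exact prime_mod4_of_dvd_sq_add_one hpp hp2 (h2 ▸ hpj)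
      · intro hpj
        exact absurd (Nat.le_of_dvd (by norm_num) hpj) (by have := hpp.two_le; omega)
    · right
      have hpu : p ∣ y ^ 2 + 1 := by
        have hu' : u ∣ y ^ 2 + 1 := ⟨2, by omega⟩
        exact h.trans hu'
      exact prime_mod4_of_dvd_sq_add_one hpp hp2 hpu
  -- 3 does not divide u
  have hu3 : ¬ (3 ∣ u) := by
    intro h3
    have h3' : 3 ∣ y ^ 2 + 1 := (h3.trans ⟨2, by omega⟩)
    have hmod : y ^ 2 % 3 = (y % 3) ^ 2 % 3 := by rw [Nat.pow_mod]
    have h3y : y % 3 < 3 := Nat.mod_lt _ (by norm_num)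
    interval_cases h : y % 3 <;> simp [h] at hmod <;> omega
  -- the odd-index part of s is not divisible by 3
  have h0f : (0:ℕ) ∈ Finset.range f := by simp; omega
  set w := ∏ j ∈ (Finset.range f).erase 0, (if f.testBit j then 2 ^ 2 ^ j + 1 else 1) with hwdef
  have hsw : s = (if f.testBit 0 then 2 ^ 2 ^ 0 + 1 else 1) * w := by
    rw [hsdef, gfun, ← Finset.mul_prod_erase _ _ h0f]
  have hw3 : ¬ (3 ∣ w) := by
    intro h3w
    obtain ⟨j, hj, h3j⟩ := (Nat.prime_three).prime.exists_mem_finset_dvd h3w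
    have hj0 : j ≠ 0 := (Finset.mem_erase.mp hj).1
    revert h3j
    split
    · intro h3j
      have h4 : (2:ℕ) ^ 2 ^ j = (2 ^ 2) ^ 2 ^ (j - 1) := by
        rw [← pow_mul]
        congr 1
        have : (2:ℕ) ^ j = 2 * 2 ^ (j-1) := by rw [← pow_succ']; congr 1; omega
        omega
      have hm : ((2:ℕ) ^ 2) ^ 2 ^ (j-1) % 3 = 1 := by rw [Nat.pow_mod]; norm_num
      omega
    · intro h3j; omega
  -- 9 does not divide N
  have h9N : ¬ (9 ∣ N) := by
    intro h9
    have hcop : Nat.Coprime 9 u := by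
      have h3u : Nat.Coprime 3 u := (Nat.Prime.coprime_iff_not_dvd (by norm_num)).mpr hu3
      have := Nat.Coprime.pow_left 2 h3u
      norm_num at this
      exact this
    have h9s : 9 ∣ s := hcop.dvd_of_dvd_mul_right (hNsu ▸ h9)
    rw [hsw] at h9s
    revert h9s
    split
    · intro h9s
      norm_num at h9s
      have : 3 ∣ w := by omega
      exact hw3 this
    · intro h9s
      rw [one_mul] at h9s
      exact hw3 ((by norm_num : (3:ℕ) ∣ 9).trans h9s)
  -- every bit of every prime exponent gives a factor dividing 2^f q^B
  have hfac_dvd : ∀ p ∈ N.primeFactors, ∀ j, (N.factorization p).testBit j →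
      (p ^ 2 ^ j + 1) ∣ 2 ^ f * q ^ B := by
    intro p hp j hbit
    have h1 : (p ^ 2 ^ j + 1) ∣ gfun p (N.factorization p) := by
      rw [gfun_eq_filter]
      apply Finset.dvd_prod_of_mem
      simp only [Finset.mem_filter, Finset.mem_range]
      exact ⟨lt_of_lt_of_le (Nat.lt_two_pow_self (n := j)) (Nat.ge_two_pow_of_testBit hbit), hbit⟩
    have h2 : gfun p (N.factorization p) ∣ infsigma N := by
      rw [infsigma_eq_s15 N]
      exact Finset.dvd_prod_of_mem _ hp
    rw [hE1] at h2
    exact h1.trans h2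
  -- structure of primes p ≠ 3 dividing N
  have hstruct : ∀ p ∈ N.primeFactors, p ≠ 3 →
      ∃ j bb, N.factorization p = 2 ^ j ∧ bb ≠ 0 ∧
        p ^ (N.factorization p) + 1 = 2 * q ^ bb ∧
        gfun p (N.factorization p) = p ^ (N.factorization p) + 1 := by
    intro p hp hp3
    have hpp := Nat.prime_of_mem_primeFactors hp
    have hpm4 : p % 4 = 1 := (hpf_mod p hp).resolve_left hp3
    have hpodd : p % 2 = 1 := by
      have := hpp.two_le
      omega
    set e := N.factorization p with he
    have he0 : e ≠ 0 := by
      have hmem : p ∈ N.factorization.support := by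
        rw [Nat.support_factorization]; exact hp
      exact Finsupp.mem_support_iff.mp hmem
    have hbit_form : ∀ j, e.testBit j → ∃ bb, bb ≠ 0 ∧ p ^ 2 ^ j + 1 = 2 * q ^ bb := by
      intro j hj
      apply factor_is_two_q_pow hq hq2 ?_ ?_ (hfac_dvd p hp j hj)
      · have := pow_two_pow_mod_four hpodd (Or.inl hpm4) (j := j)
        omega
      · have h1 : p ≤ p ^ 2 ^ j := Nat.le_self_pow (by positivity) p
        have := hpp.two_le
        omega
    obtain ⟨j0, hj0⟩ : ∃ j, e.testBit j = true := by
      by_contra hno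
      push_neg at hno
      apply he0
      apply Nat.eq_of_testBit_eq
      intro i
      rw [Nat.zero_testBit]
      exact Bool.eq_false_iff.mpr (hno i)
    have huniq : ∀ j, e.testBit j = true → j = j0 := by
      intro j hj
      by_contra hne
      obtain ⟨b1, hb1, hbe1⟩ := hbit_form j hj
      obtain ⟨b0, hb0, hbe0⟩ := hbit_form j0 hj0
      rcases lt_or_gt_of_ne hne with hlt | hgt
      · exact no_two_bits hq hq3 hlt hbe1 hb1 hbe0 hb0
      · exact no_two_bits hq hq3 hgt hbe0 hb0 hbe1 hb1
    have hefilter : (Finset.range e).filter (fun j => e.testBit j) = {j0} := by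
      ext x
      simp only [Finset.mem_filter, Finset.mem_range, Finset.mem_singleton]
      constructor
      · rintro ⟨_, hb⟩
        exact huniq x hb
      · rintro rfl
        exact ⟨lt_of_lt_of_le (Nat.lt_two_pow_self) (Nat.ge_two_pow_of_testBit hj0), hj0⟩
    have he2 : e = 2 ^ j0 := by
      conv_lhs => rw [← bits_sum e]
      rw [hefilter, Finset.sum_singleton]
    obtain ⟨bb, hbb0, hbbe⟩ := hbit_form j0 hj0
    refine ⟨j0, bb, he2, hbb0, by rw [he2]; exact hbbe, ?_⟩
    rw [gfun_eq_filter, hefilter, Finset.prod_singleton, he2]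
  -- the function selecting the q-exponent
  set bf : ℕ → ℕ := fun p => ((p ^ (N.factorization p) + 1) / 2).factorization q with hbfdef
  have hbT : ∀ p ∈ N.primeFactors, p ≠ 3 →
      bf p ≠ 0 ∧ p ^ (N.factorization p) + 1 = 2 * q ^ (bf p) ∧
        gfun p (N.factorization p) = 2 * q ^ (bf p) := by
    intro p hp hp3
    obtain ⟨j, bb, hej, hbb0, hpe, hg⟩ := hstruct p hp hp3
    have hbfp : bf p = bb := by
      rw [hbfdef]
      simp only
      rw [hpe, Nat.mul_div_cancel_left _ (by norm_num : 0 < 2), hq.factorization_pow,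
        Finsupp.single_eq_same]
    rw [hbfp]
    exact ⟨hbb0, hpe, by rw [hg]; exact hpe⟩
  -- assemble the product over primes ≠ 3
  classical
  set T := N.primeFactors.erase 3 with hTdef
  set t := T.card with htdef
  set Bb := ∑ p ∈ T, bf p with hBbdef
  have hTmem : ∀ p ∈ T, p ∈ N.primeFactors ∧ p ≠ 3 := by
    intro p hp
    exact ⟨Finset.mem_of_mem_erase hp, (Finset.mem_erase.mp hp).1⟩
  have hprodT_g : ∏ p ∈ T, gfun p (N.factorization p) = 2 ^ t * q ^ Bb := by
    rw [Finset.prod_congr rfl (fun p hp => (hbT p (hTmem p hp).1 (hTmem p hp).2).2.2)]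
    rw [Finset.prod_mul_distrib, Finset.prod_const, Finset.prod_pow_eq_pow_sum]
  have hprodT_lt : T.Nonempty → ∏ p ∈ T, p ^ (N.factorization p) < 2 ^ t * q ^ Bb := by
    intro hTne
    calc ∏ p ∈ T, p ^ (N.factorization p)
        < ∏ p ∈ T, (2 * q ^ (bf p)) := by
          apply Finset.prod_lt_prod_of_nonempty _ _ hTne
          · intro p hp
            exact pow_pos (Nat.prime_of_mem_primeFactors (hTmem p hp).1).pos _
          · intro p hp
            have := (hbT p (hTmem p hp).1 (hTmem p hp).2).2.1
            omega
      _ = 2 ^ t * q ^ Bb := by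
          rw [Finset.prod_mul_distrib, Finset.prod_const, Finset.prod_pow_eq_pow_sum]
  have hNprod : ∏ p ∈ N.primeFactors, p ^ (N.factorization p) = N := by
    conv_rhs => rw [← Nat.factorization_prod_pow_eq_self hNne]
    rw [Finsupp.prod, Nat.support_factorization]
  have hsig : infsigma N = ∏ p ∈ N.primeFactors, gfun p (N.factorization p) := infsigma_eq_s15 N
  -- injectivity of bf on T
  have hinj : ∀ p ∈ T, ∀ p' ∈ T, bf p = bf p' → p = p' := by
    intro p hp p' hp' heq
    have h1 := (hbT p (hTmem p hp).1 (hTmem p hp).2).2.1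
    have h2 := (hbT p' (hTmem p' hp').1 (hTmem p' hp').2).2.1
    rw [heq] at h1
    have hpe : p ^ (N.factorization p) = p' ^ (N.factorization p') := by omega
    have hpp := Nat.prime_of_mem_primeFactors (hTmem p hp).1
    have hpp' := Nat.prime_of_mem_primeFactors (hTmem p' hp').1
    have he0 : N.factorization p ≠ 0 := by
      have hmem : p ∈ N.factorization.support := by
        rw [Nat.support_factorization]; exact (hTmem p hp).1
      exact Finsupp.mem_support_iff.mp hmem
    have hdvd : p ∣ p' ^ (N.factorization p') := hpe ▸ dvd_pow_self p he0
    exact (Nat.prime_dvd_prime_iff_eq hpp hpp').mp (hpp.dvd_of_dvd_pow hdvd)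
  -- bf values are nonzero on T
  have hbf1 : ∀ p ∈ T, bf p ≠ 0 := fun p hp => (hbT p (hTmem p hp).1 (hTmem p hp).2).1
  -- case split on whether 3 divides N
  by_cases h3 : 3 ∈ N.primeFactors
  · -- odd case : 3 ∣ N
    have he3 : N.factorization 3 = 1 := by
      have h1le : N.factorization 3 ≠ 0 := by
        have hmem : (3:ℕ) ∈ N.factorization.support := by
          rw [Nat.support_factorization]; exact h3
        exact Finsupp.mem_support_iff.mp hmem
      have hle : N.factorization 3 ≤ 1 := by
        by_contra hgt
        push_neg at hgt
        apply h9N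
        have h9 : (3:ℕ) ^ 2 ∣ N :=
          (Nat.Prime.pow_dvd_iff_le_factorization (by norm_num) hNne).mpr hgt
        norm_num at h9
        exact h9
      omega
    have hNfact : N = 3 * ∏ p ∈ T, p ^ (N.factorization p) := by
      have hme := Finset.mul_prod_erase N.primeFactors (fun p => p ^ N.factorization p) h3
      rw [hNprod] at hme
      simp only [he3, pow_one] at hme
      exact hme.symm
    have hsig3 : infsigma N = 2 ^ (t + 2) * q ^ Bb := by
      rw [hsig, ← Finset.mul_prod_erase _ _ h3, he3, ← hTdef, hprodT_g]
      have hg3 : gfun 3 1 = 4 := by rw [gfun_one]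
      rw [hg3]
      ring
    have hftB : f = t + 2 ∧ B = Bb := by
      apply two_q_pow_inj hq hq2
      rw [← hE1, hsig3]
    -- f is odd since 3 ∣ N hence 3 ∣ s
    have h3N : (3:ℕ) ∣ N := Nat.dvd_of_mem_primeFactors h3
    have h3s : (3:ℕ) ∣ s := by
      rcases (Nat.Prime.dvd_mul (by norm_num : Nat.Prime 3)).mp (hNsu ▸ h3N) with h | h
      · exact h
      · exact absurd h hu3
    have hbit0 : f.testBit 0 = true := by
      by_contra hb
      rw [hsw] at h3s
      rw [Bool.not_eq_true] at hb
      rw [hb] at h3s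
      simp at h3s
      exact hw3 h3s
    have hsw3 : s = 3 * w := by
      rw [hsw, hbit0]
      norm_num
    have hwlb : 2 ^ (t + 1) ≤ w := by
      have hsum : (∑ j ∈ (Finset.range f).erase 0, if f.testBit j then 2 ^ j else 0) = f - 1 := by
        have hadd := Finset.add_sum_erase (Finset.range f) (fun j => if f.testBit j then 2 ^ j else 0) h0f
        rw [sum_testBit f] at hadd
        simp only [hbit0, if_true, pow_zero] at hadd
        omega
      calc (2:ℕ) ^ (t + 1) = 2 ^ (f - 1) := by rw [hftB.1]; rfl
        _ = 2 ^ (∑ j ∈ (Finset.range f).erase 0, if f.testBit j then 2 ^ j else 0) := by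
            rw [hsum]
        _ = ∏ j ∈ (Finset.range f).erase 0, 2 ^ (if f.testBit j then 2 ^ j else 0) :=
            (Finset.prod_pow_eq_pow_sum _ _ _).symm
        _ ≤ w := by
            rw [hwdef]
            apply Finset.prod_le_prod'
            intro i _
            split <;> simp
    have hTne : T.Nonempty := by
      rw [Finset.nonempty_iff_ne_empty]
      intro hT0
      have hBb0 : Bb = 0 := by rw [hBbdef, hT0, Finset.sum_empty]
      have := hftB.2
      omega
    -- the two sides of the key equation
    have hkey2 : w * (q ^ B + 1) = 2 * ∏ p ∈ T, p ^ (N.factorization p) := by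
      have hk := key
      rw [hsw3, hNfact] at hk
      apply Nat.eq_of_mul_eq_mul_left (show 0 < 3 by norm_num)
      ring_nf at hk ⊢
      omega
    have hc1 : 2 ^ (t + 1) * q ^ B + 2 ^ (t + 1) ≤ 2 * ∏ p ∈ T, p ^ (N.factorization p) := by
      calc 2 ^ (t + 1) * q ^ B + 2 ^ (t + 1) = 2 ^ (t + 1) * (q ^ B + 1) := by ring
        _ ≤ w * (q ^ B + 1) := Nat.mul_le_mul_right _ hwlb
        _ = 2 * ∏ p ∈ T, p ^ (N.factorization p) := hkey2
    have hc2 : 2 * ∏ p ∈ T, p ^ (N.factorization p) < 2 ^ (t + 1) * q ^ B := by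
      have := hprodT_lt hTne
      calc 2 * ∏ p ∈ T, p ^ (N.factorization p) < 2 * (2 ^ t * q ^ Bb) := by omega
        _ = 2 ^ (t + 1) * q ^ Bb := by ring
        _ = 2 ^ (t + 1) * q ^ B := by rw [hftB.2]
    have h2t1 : 0 < (2:ℕ) ^ (t + 1) := by positivity
    omega
  · -- even case : 3 ∤ N
    have h3N : ¬ (3:ℕ) ∣ N := fun hd => h3 (Nat.mem_primeFactors.mpr ⟨by norm_num, hd, hNne⟩)
    have hTpf : T = N.primeFactors := by rw [hTdef, Finset.erase_eq_of_notMem h3]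
    have hNfact : N = ∏ p ∈ T, p ^ (N.factorization p) := by rw [hTpf, hNprod]
    have hsigT : infsigma N = 2 ^ t * q ^ Bb := by rw [hsig, ← hTpf, hprodT_g]
    have hftB : f = t ∧ B = Bb := by
      apply two_q_pow_inj hq hq2
      rw [← hE1, hsigT]
    -- f is even
    have hbit0 : f.testBit 0 = false := by
      by_contra hb
      rw [Bool.not_eq_false] at hb
      have h3s : (3:ℕ) ∣ s := by
        have h30 : ((if f.testBit 0 then 2 ^ 2 ^ 0 + 1 else 1) : ℕ) = 3 := by
          rw [hb]; norm_num
        rw [hsdef, gfun]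
        exact h30 ▸ Finset.dvd_prod_of_mem _ h0f
      exact h3N (hNsu ▸ h3s.mul_right u)
    have hfeven : f % 2 = 0 := by
      have := Nat.testBit_zero f
      rw [hbit0] at this
      have hne : ¬ (f % 2 = 1) := by
        intro hm
        rw [hm] at this
        simp at this
      omega
    -- t ≥ 2
    have ht0 : t ≠ 0 := by
      intro h0
      have hTe : T = ∅ := Finset.card_eq_zero.mp (htdef ▸ h0)
      have hBb0 : Bb = 0 := by rw [hBbdef, hTe, Finset.sum_empty]
      have := hftB.2
      omega
    have ht2 : 2 ≤ t := by
      have := hftB.1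
      omega
    -- Bb ≥ 3
    obtain ⟨p1, hp1, p2, hp2, hp12⟩ := Finset.one_lt_card.mp (show 1 < T.card by omega)
    have hBb3 : 3 ≤ Bb := by
      have hsub : ({p1, p2} : Finset ℕ) ⊆ T := by
        intro x hx
        rcases Finset.mem_insert.mp hx with rfl | hx
        · exact hp1
        · rw [Finset.mem_singleton.mp hx]; exact hp2
      have hle : ∑ p ∈ ({p1, p2} : Finset ℕ), bf p ≤ Bb := by
        rw [hBbdef]
        exact Finset.sum_le_sum_of_subset hsub
      rw [Finset.sum_pair hp12] at hle
      have hb1 := hbf1 p1 hp1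
      have hb2 := hbf1 p2 hp2
      have hbne : bf p1 ≠ bf p2 := fun hh => hp12 (hinj p1 hp1 p2 hp2 hh)
      omega
    have hq27 : 27 ≤ q ^ B := by
      calc (27:ℕ) = 3 ^ 3 := by norm_num
        _ ≤ q ^ 3 := Nat.pow_le_pow_left hq3 3
        _ ≤ q ^ B := Nat.pow_le_pow_right (by omega) (by omega)
    -- 3 s < 2 ^ (f + 2)
    have h3s : 3 * s < 2 ^ (f + 2) := by
      have hseq : s = ∏ j ∈ (Finset.range f).filter (fun j => f.testBit j), (2 ^ 2 ^ j + 1) := by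
        rw [hsdef, gfun_eq_filter]
      have h0nin : 0 ∉ (Finset.range f).filter (fun j => f.testBit j) := by
        intro hmem
        have := (Finset.mem_filter.mp hmem).2
        rw [hbit0] at this
        exact Bool.false_ne_true this
      have := sfun_lt _ h0nin
      rw [bits_sum f] at this
      rw [hseq]
      exact this
    -- now pass to ℚ
    set X : ℚ := (q : ℚ) ^ B with hXdef
    have hXcast : ((q ^ B : ℕ) : ℚ) = X := by push_cast [hXdef]; ring
    have hX27 : (27:ℚ) ≤ X := by
      rw [← hXcast]
      exact_mod_cast hq27
    have hXpos : (0:ℚ) < X := by positivity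
    have hcast_eq : (s:ℚ) * (X + 1) = 2 * ∏ p ∈ T, ((p:ℚ)) ^ (N.factorization p) := by
      have hk := key
      rw [hNfact] at hk
      have h2c := congrArg (fun n : ℕ => (n : ℚ)) hk
      push_cast at h2c
      rw [hXdef]
      exact h2c
    have hfactor : ∀ p ∈ T, ((p:ℚ)) ^ (N.factorization p) = 2 * (q:ℚ) ^ (bf p) - 1 := by
      intro p hp
      have h1 := (hbT p (hTmem p hp).1 (hTmem p hp).2).2.1
      have := congrArg (fun n : ℕ => (n : ℚ)) h1
      push_cast at this
      linarith
    -- lower bound for the product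
    have hprod_lb : (3/2 : ℚ) * 2 ^ t * X ≤ 2 * ∏ p ∈ T, ((p:ℚ)) ^ (N.factorization p) := by
      rw [Finset.prod_congr rfl hfactor]
      have hqQ : (0:ℚ) < (q:ℚ) := by
        have := hq.pos
        exact_mod_cast this
      have hrw : ∀ p ∈ T, 2 * (q:ℚ) ^ (bf p) - 1
          = (2 * (q:ℚ) ^ (bf p)) * (1 - 1 / (2 * (q:ℚ) ^ (bf p))) := by
        intro p hp
        field_simp
      rw [Finset.prod_congr rfl hrw, Finset.prod_mul_distrib]
      have h2qb : ∏ p ∈ T, (2 * (q:ℚ) ^ (bf p)) = 2 ^ t * X := by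
        rw [Finset.prod_mul_distrib, Finset.prod_const, Finset.prod_pow_eq_pow_sum, ← hBbdef,
          ← htdef, hXdef, hftB.2]
      rw [h2qb]
      have hsum14 : ∑ p ∈ T, 1 / (2 * (q:ℚ) ^ (bf p)) ≤ 1/4 := by
        have hle : ∀ p ∈ T, 1 / (2 * (q:ℚ) ^ (bf p)) ≤ (1/2 : ℚ) * (1/3) ^ (bf p) := by
          intro p hp
          have h3q : (3:ℚ) ^ (bf p) ≤ (q:ℚ) ^ (bf p) := by
            apply pow_le_pow_left₀ (by norm_num)
            exact_mod_cast hq3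
          have h3pos : (0:ℚ) < 3 ^ (bf p) := by positivity
          have heq : (1/2 : ℚ) * (1/3) ^ (bf p) = 1 / (2 * 3 ^ (bf p)) := by
            rw [div_pow]
            ring
          rw [heq]
          apply one_div_le_one_div_of_le
          · linarith
          · linarith
        calc ∑ p ∈ T, 1 / (2 * (q:ℚ) ^ (bf p))
            ≤ ∑ p ∈ T, (1/2 : ℚ) * (1/3) ^ (bf p) := Finset.sum_le_sum hle
          _ = (1/2 : ℚ) * ∑ p ∈ T, ((1:ℚ)/3) ^ (bf p) := by rw [Finset.mul_sum]
          _ = (1/2 : ℚ) * ∑ k ∈ T.image bf, ((1:ℚ)/3) ^ k := by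
              rw [Finset.sum_image hinj]
          _ ≤ (1/2 : ℚ) * (1/2) := by
              have hge : ∀ k ∈ T.image bf, 1 ≤ k := by
                intro k hk
                obtain ⟨p, hp, rfl⟩ := Finset.mem_image.mp hk
                have := hbf1 p hp
                omega
              have := geom_bound (T.image bf) hge
              linarith
          _ = 1/4 := by norm_num
      have hW : (3/4 : ℚ) ≤ ∏ p ∈ T, (1 - 1 / (2 * (q:ℚ) ^ (bf p))) := by
        have h0' : ∀ p ∈ T, (0:ℚ) ≤ 1 / (2 * (q:ℚ) ^ (bf p)) := by
          intro p hp
          positivity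
        have h1' : ∀ p ∈ T, 1 / (2 * (q:ℚ) ^ (bf p)) ≤ 1 := by
          intro p hp
          have h1q : (1:ℚ) ≤ (q:ℚ) ^ (bf p) := by
            have hq1 : (1:ℚ) ≤ (q:ℚ) := by
              have := hq.one_lt
              exact_mod_cast this.le
            calc (1:ℚ) = 1 ^ (bf p) := (one_pow _).symm
              _ ≤ (q:ℚ) ^ (bf p) := pow_le_pow_left₀ (by norm_num) hq1 _
          rw [div_le_one (by linarith)]
          linarith
        have := weier T _ h0' h1'
        linarith
      have h2tX : (0:ℚ) ≤ 2 ^ t * X := by positivity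
      calc (3/2 : ℚ) * 2 ^ t * X = 2 * ((2:ℚ) ^ t * X) * (3/4) := by ring
        _ ≤ 2 * ((2:ℚ) ^ t * X) * ∏ p ∈ T, (1 - 1 / (2 * (q:ℚ) ^ (bf p))) := by
            apply mul_le_mul_of_nonneg_left hW
            positivity
        _ = 2 * ((2:ℚ) ^ t * X * ∏ p ∈ T, (1 - 1 / (2 * (q:ℚ) ^ (bf p)))) := by ring
    -- upper bound
    have hsupper : (s:ℚ) * (X + 1) < (4/3 : ℚ) * 2 ^ t * (X + 1) := by
      have h3s' : (3:ℚ) * (s:ℚ) < 2 ^ (f + 2) := by exact_mod_cast h3s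
      rw [hftB.1] at h3s'
      have hpow : (2:ℚ) ^ (t + 2) = 4 * 2 ^ t := by ring
      rw [hpow] at h3s'
      have hslt : (s:ℚ) < (4/3) * 2 ^ t := by linarith
      have hx1 : (0:ℚ) < X + 1 := by linarith
      calc (s:ℚ) * (X + 1) < ((4/3 : ℚ) * 2 ^ t) * (X + 1) :=
            mul_lt_mul_of_pos_right hslt hx1
        _ = (4/3 : ℚ) * 2 ^ t * (X + 1) := by ring
    have hlast : (4/3 : ℚ) * 2 ^ t * (X + 1) < (3/2 : ℚ) * 2 ^ t * X := by
      have h2t : (0:ℚ) < 2 ^ t := by positivity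
      nlinarith
    rw [← hcast_eq] at hprod_lb
    linarith
end

section
/- For every l ≥ 0, the Fermat number 2^{2^l} + 1 is not a proper prime power; that is, there is no prime q and integer f > 1 with 2^{2^l} + 1 = q^f. -/
theorem fermat_number_not_proper_prime_pow (l : ℕ) :
    ¬ ∃ (q f : ℕ), q.Prime ∧ 1 < f ∧ 2 ^ 2 ^ l + 1 = q ^ f := by
  rintro ⟨q, f, hq, hf, h⟩
  set m := 2 ^ l with hm
  have hm1 : 1 ≤ m := Nat.one_le_two_pow
  have hqodd : Odd q := by
    rcases hq.eq_two_or_odd' with h2 | ho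
    · subst h2
      have h2f : 2 ∣ 2 ^ f := dvd_pow_self 2 (by omega)
      have h2m : 2 ∣ 2 ^ m := dvd_pow_self 2 (by omega)
      omega
    · exact ho
  have hq3 : 3 ≤ q := by
    have := hq.two_le
    rcases hqodd with ⟨k, hk⟩
    omega
  rcases Nat.even_or_odd f with hfe | hfo
  · -- f even
    obtain ⟨g, hg⟩ := hfe
    have hg1 : 1 ≤ g := by omega
    set Q := q ^ g with hQ
    have hQ3 : 3 ≤ Q := le_trans hq3 (Nat.le_self_pow (by omega) q)
    have hQQ : Q * Q = 2 ^ m + 1 := by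
      rw [hQ, ← pow_add, ← hg]; omega
    clear_value Q
    have hfac : (Q - 1) * (Q + 1) = 2 ^ m := by
      obtain ⟨r, hr⟩ := Nat.exists_eq_add_of_le hQ3
      subst hr
      have e1 : (2 + r) * (4 + r) + 1 = (3 + r) * (3 + r) := by ring
      have e2 : 3 + r - 1 = 2 + r := by omega
      have e3 : 3 + r + 1 = 4 + r := by omega
      rw [e2, e3]
      omega
    have hd1 : (Q - 1) ∣ 2 ^ m := ⟨Q + 1, hfac.symm⟩
    have hd2 : (Q + 1) ∣ 2 ^ m := ⟨Q - 1, by rw [← hfac]; ring⟩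
    obtain ⟨a, _, haeq⟩ := (Nat.dvd_prime_pow Nat.prime_two).mp hd1
    obtain ⟨b, _, hbeq⟩ := (Nat.dvd_prime_pow Nat.prime_two).mp hd2
    have hab : 2 ^ b = 2 ^ a + 2 := by omega
    have ha1 : 1 ≤ a := by
      by_contra hc
      push_neg at hc
      interval_cases a
      · simp at haeq; omega
    have hb2 : 2 ≤ b := by
      by_contra hc
      push_neg at hc
      interval_cases b <;> omega
    have ha : a = 1 := by
      by_contra hc
      have ha2 : 2 ≤ a := by omega
      have h4a : 4 ∣ 2 ^ a := by
        have : (2:ℕ) ^ 2 ∣ 2 ^ a := pow_dvd_pow 2 ha2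
        simpa using this
      have h4b : 4 ∣ 2 ^ b := by
        have : (2:ℕ) ^ 2 ∣ 2 ^ b := pow_dvd_pow 2 hb2
        simpa using this
      omega
    subst ha
    have hbv : b = 2 := Nat.pow_right_injective (le_refl 2) (by omega : 2 ^ b = 2 ^ 2)
    have hQv : Q = 3 := by subst hbv; simp at haeq hbeq; omega
    have hm3 : m = 3 := Nat.pow_right_injective (le_refl 2)
      (by rw [hQv] at hQQ; omega : 2 ^ m = 2 ^ 3)
    rcases l with _ | k
    · simp [hm] at hm3
    · have : 2 ∣ 2 ^ (k + 1) := dvd_pow_self 2 (by omega)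
      omega
  · -- f odd
    set S := ∑ i ∈ Finset.range f, q ^ i with hS
    have key : ((q : ℤ) - 1) * (S : ℤ) = 2 ^ m := by
      have hg := geom_sum_mul (x := (q : ℤ)) f
      have hqf : ((q : ℤ)) ^ f = 2 ^ m + 1 := by exact_mod_cast (by omega : q ^ f = 2 ^ m + 1)
      push_cast [hS]
      linarith [hg, hqf]
    have hdvdZ : (S : ℤ) ∣ (2 ^ m : ℕ) := ⟨(q : ℤ) - 1, by push_cast; linarith [key]⟩
    have hdvd : S ∣ 2 ^ m := by exact_mod_cast hdvdZ
    have hSodd : Odd S := by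
      rw [Nat.odd_iff]
      rw [hS, Finset.sum_nat_mod]
      have : ∀ i ∈ Finset.range f, q ^ i % 2 = 1 := by
        intro i _
        exact Nat.odd_iff.mp (hqodd.pow)
      rw [Finset.sum_congr rfl this]
      simp [Nat.odd_iff.mp hfo]
    have hScop : Nat.Coprime S (2 ^ m) := by
      apply Nat.Coprime.pow_right
      refine ((Nat.prime_two.coprime_iff_not_dvd).mpr ?_).symm
      rw [Nat.odd_iff] at hSodd
      omega
    have hS1 : S = 1 := by
      have := Nat.gcd_eq_left hdvd
      rw [hScop] at this
      omega
    have hSge : q ^ 0 + q ^ 1 ≤ S := by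
      have h01 : ({0, 1} : Finset ℕ) ⊆ Finset.range f := by
        intro x hx
        simp at hx
        simp
        omega
      calc q ^ 0 + q ^ 1 = ∑ i ∈ ({0, 1} : Finset ℕ), q ^ i := by simp
        _ ≤ S := Finset.sum_le_sum_of_subset h01
    simp at hSge
    omega
end

section
/- The only solution of the equation x^4 + 1 = 2y^2 in positive integers x, y is (x, y) = (1, 1). -/
lemma aux_abs_pow4 (z : ℤ) : |z| ^ 4 = z ^ 4 := by
  rw [← abs_pow]; exact abs_of_nonneg (by positivity)

lemma aux_fourth (s t u : ℤ) (hs : 0 < s) (hco : IsCoprime s t) (h : s * t = u ^ 4) :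
    ∃ e : ℤ, s = e ^ 4 := by
  obtain ⟨d, hd⟩ := exists_associated_pow_of_mul_eq_pow' hco h
  rcases Int.associated_iff.mp hd with h1 | h1
  · exact ⟨d, h1.symm⟩
  · exfalso
    have : (0:ℤ) ≤ d ^ 4 := by positivity
    omega

lemma aux_natAbs_lt_of_sq_lt {m a : ℤ} (h : m ^ 2 < a ^ 2) : m.natAbs < a.natAbs := by
  have h1 : (m.natAbs : ℤ) ^ 2 < (a.natAbs : ℤ) ^ 2 := by
    rwa [Int.natAbs_sq m, Int.natAbs_sq a]
  have h2 : m.natAbs ^ 2 < a.natAbs ^ 2 := by exact_mod_cast h1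
  exact Nat.pow_lt_pow_iff_left (by norm_num) |>.mp h2

lemma aux_sq_of_coprime_pos {r n b : ℤ} (hr : 0 < r) (hco : IsCoprime r n)
    (h : r * n = b ^ 2) : ∃ u : ℤ, r = u ^ 2 := by
  obtain ⟨u, hu | hu⟩ := Int.sq_of_isCoprime hco h
  · exact ⟨u, hu⟩
  · exfalso; have : (0:ℤ) ≤ u ^ 2 := sq_nonneg u; omega

lemma descent : ∀ A : ℕ, ∀ a b c : ℤ, a.natAbs ≤ A → 0 < a → 0 < b → 0 < c →
    a ^ 4 = b ^ 4 + c ^ 2 → False := by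
  intro A
  induction A using Nat.strong_induction_on with
  | _ A IH =>
  intro a b c hA ha hb hc h
  by_cases hg : Int.gcd a b = 1
  · -- coprime case
    have hab : IsCoprime a b := Int.isCoprime_iff_gcd_eq_one.mpr hg
    have hbc : IsCoprime b c := by
      have h1 : IsCoprime b (a ^ 4) := hab.symm.pow_right
      have h2 : a ^ 4 = c ^ 2 + b * b ^ 3 := by linear_combination h
      rw [h2] at h1
      have h3 : IsCoprime b (c ^ 2) := h1.of_add_mul_left_right
      exact h3.of_isCoprime_of_dvd_right (dvd_pow_self c two_ne_zero)
    rcases Int.even_or_odd b with hbe | hbo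
    · -- b even, c odd
      have hcodd : Odd c := by
        rcases Int.even_or_odd c with hce | hco
        · exfalso
          have := hbc.isUnit_of_dvd' hbe.two_dvd hce.two_dvd
          rw [Int.isUnit_iff] at this
          omega
        · exact hco
      have triple : PythagoreanTriple c (b ^ 2) (a ^ 2) := by
        show c * c + b ^ 2 * b ^ 2 = a ^ 2 * a ^ 2
        linear_combination -h
      have hco2 : Int.gcd c (b ^ 2) = 1 :=
        Int.isCoprime_iff_gcd_eq_one.mp (hbc.symm.pow_right)
      have hparc : c % 2 = 1 := Int.odd_iff.mp hcodd
      obtain ⟨m, n, hc1, hb2, ha2, hmn, hpar, hm0⟩ :=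
        triple.coprime_classification' hco2 hparc (by positivity)
      have hmco : IsCoprime m n := Int.isCoprime_iff_gcd_eq_one.mpr hmn
      have hmne : m ≠ 0 := by
        intro h0
        rw [h0] at hb2
        have hb20 : b ^ 2 = 0 := by linear_combination hb2
        have := pow_pos hb 2
        linarith
      have hmpos : 0 < m := lt_of_le_of_ne hm0 (Ne.symm hmne)
      have hnpos : 0 < n := by
        by_contra hcon
        push_neg at hcon
        have h1 := pow_pos hb 2
        have h2 : m * n ≤ 0 := mul_nonpos_iff.mpr (Or.inl ⟨hm0, hcon⟩)
        nlinarith [hb2, h1, h2]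
      have haodd : Odd a := by
        have hsq : Odd (a ^ 2) := by
          rw [ha2]
          rcases hpar with ⟨hme, hno⟩ | ⟨hmo, hne⟩
          · have h1 : Even (m ^ 2) := (Int.even_pow).mpr ⟨Int.even_iff.mpr hme, two_ne_zero⟩
            have h2 : Odd (n ^ 2) := (Int.odd_iff.mpr hno).pow
            exact h1.add_odd h2
          · have h1 : Odd (m ^ 2) := (Int.odd_iff.mpr hmo).pow
            have h2 : Even (n ^ 2) := (Int.even_pow).mpr ⟨Int.even_iff.mpr hne, two_ne_zero⟩
            exact h1.add_even h2
        rcases Int.even_or_odd a with hae | hao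
        · exact absurd hsq (Int.not_odd_iff_even.mpr ((Int.even_pow).mpr ⟨hae, two_ne_zero⟩))
        · exact hao
      have hm2 : 1 ≤ m ^ 2 := by
        have := Int.lt_iff_add_one_le.mp (pow_pos hmpos 2); linarith
      have hn2 : 1 ≤ n ^ 2 := by
        have := Int.lt_iff_add_one_le.mp (pow_pos hnpos 2); linarith
      have ha2' : 2 ≤ a := by
        by_contra hcon
        push_neg at hcon
        have ha1 : a = 1 := by omega
        rw [ha1] at ha2
        norm_num at ha2
        linarith
      obtain ⟨b1, hb1e⟩ : ∃ b1, b = 2 * b1 := by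
        obtain ⟨k, hk⟩ := hbe; exact ⟨k, by omega⟩
      rcases hpar with ⟨hme, hno⟩ | ⟨hmo, hne⟩
      · -- m even, n odd
        obtain ⟨r, hr⟩ : ∃ r, m = 2 * r := ⟨m / 2, by omega⟩
        have hrpos : 0 < r := by omega
        have hrn : IsCoprime r n := by
          rw [hr] at hmco; exact hmco.of_mul_left_right
        have hb1sq : r * n = b1 ^ 2 := by
          apply mul_left_cancel₀ (by norm_num : (4:ℤ) ≠ 0)
          rw [hr, hb1e] at hb2
          linear_combination -hb2
        obtain ⟨u, hu⟩ := aux_sq_of_coprime_pos hrpos hrn hb1sq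
        obtain ⟨v, hv⟩ := aux_sq_of_coprime_pos hnpos hrn.symm (show n * r = b1 ^ 2 by linear_combination hb1sq)
        have hu0 : u ≠ 0 := by intro h0; rw [h0] at hu; simp at hu; omega
        have hv0 : v ≠ 0 := by intro h0; rw [h0] at hv; simp at hv; omega
        have hvodd : Odd v := by
          rcases Int.even_or_odd v with hve | hvo
          · exfalso
            have : Even n := by
              rw [hv]; exact (Int.even_pow).mpr ⟨hve, two_ne_zero⟩
            rw [Int.even_iff] at this; omega
          · exact hvo
        have key : a ^ 2 = 4 * u ^ 4 + v ^ 4 := by rw [ha2, hr, hu, hv]; ring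
        have hna : IsCoprime n a := by
          have h1 : IsCoprime n (m ^ 2) := hmco.symm.pow_right
          have h2 : a ^ 2 = m ^ 2 + n * n := by linear_combination ha2
          have h3 : IsCoprime n (a ^ 2) := by rw [h2]; exact h1.add_mul_left_right n
          exact h3.of_isCoprime_of_dvd_right (dvd_pow_self a two_ne_zero)
        obtain ⟨s, hs2⟩ : ∃ s, a - v ^ 2 = 2 * s := by
          have hev : Even (a - v ^ 2) := haodd.sub_odd hvodd.pow
          obtain ⟨k, hk⟩ := hev; exact ⟨k, by linarith⟩
        obtain ⟨t, ht2⟩ : ∃ t, a + v ^ 2 = 2 * t := by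
          have hev : Even (a + v ^ 2) := haodd.add_odd hvodd.pow
          obtain ⟨k, hk⟩ := hev; exact ⟨k, by linarith⟩
        have hsum : s + t = a := by linarith
        have hdif : t - s = v ^ 2 := by linarith
        have hst : s * t = u ^ 4 := by
          apply mul_left_cancel₀ (by norm_num : (4:ℤ) ≠ 0)
          linear_combination (-2*t) * hs2 - (a - v ^ 2) * ht2 + key
        have hav : v ^ 2 ≤ a := by
          by_contra hc'
          push_neg at hc'
          have h1' : a * a < v ^ 2 * v ^ 2 := mul_lt_mul'' hc' hc' ha.le ha.le
          have h1 : a ^ 2 < v ^ 4 := by linarith [h1']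
          have h2 : (0:ℤ) ≤ u ^ 4 := by positivity
          linarith
        have hsnn : 0 ≤ s := by linarith
        have hs0 : s ≠ 0 := by
          intro h0
          rw [h0] at hs2
          have hae : a = v ^ 2 := by linarith
          have hav4 : a ^ 2 = v ^ 4 := by rw [hae]; ring
          have hu4 : u ^ 4 = 0 := by linarith
          have : u = 0 := by
            exact pow_eq_zero_iff (by norm_num : (4:ℕ) ≠ 0) |>.mp hu4
          exact hu0 this
        have hsp : 0 < s := lt_of_le_of_ne hsnn (Ne.symm hs0)
        have htp : 0 < t := by have := sq_nonneg v; linarith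
        have hstco : IsCoprime s t := by
          obtain ⟨x, y, hxy⟩ := hna
          exact ⟨y - x, y + x, by linear_combination y * hsum + x * hdif + hxy - x * hv⟩
        obtain ⟨e, he⟩ := aux_fourth s t u hsp hstco hst
        obtain ⟨f, hf⟩ := aux_fourth t s u htp hstco.symm (by linear_combination hst)
        have hfinal : f ^ 4 = e ^ 4 + v ^ 2 := by rw [← he, ← hf]; linarith
        have he0 : e ≠ 0 := by intro h0; rw [h0] at he; simp at he; omega
        have hf0 : f ≠ 0 := by intro h0; rw [h0] at hf; simp at hf; omega
        have hflt : f.natAbs < a.natAbs := by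
          apply aux_natAbs_lt_of_sq_lt
          have hta : t ≤ a := by linarith
          have hf2 : 1 ≤ f ^ 2 := by
            have := Int.lt_iff_add_one_le.mp (sq_pos_of_ne_zero hf0); linarith
          have h1 : f ^ 2 ≤ f ^ 4 := by
            have := le_self_pow₀ hf2 two_ne_zero
            linarith [this]
          have h2 : a < a ^ 2 := by
            have h3 : a * 1 < a * a := by
              apply mul_lt_mul_of_pos_left (by linarith) (by linarith)
            linarith [h3]
          rw [hf] at hta
          linarith
        apply IH f.natAbs (lt_of_lt_of_le hflt hA) |f| |e| |v|
          (le_of_eq (Int.natAbs_abs f)) (abs_pos.mpr hf0) (abs_pos.mpr he0)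
          (abs_pos.mpr hv0)
        rw [aux_abs_pow4, aux_abs_pow4, sq_abs]
        exact hfinal
      · -- m odd, n even
        obtain ⟨r, hr⟩ : ∃ r, n = 2 * r := ⟨n / 2, by omega⟩
        have hrpos : 0 < r := by omega
        have hmr : IsCoprime m r := by
          rw [hr] at hmco; exact hmco.of_mul_right_right
        have hb1sq : m * r = b1 ^ 2 := by
          apply mul_left_cancel₀ (by norm_num : (4:ℤ) ≠ 0)
          rw [hr, hb1e] at hb2
          linear_combination -hb2
        obtain ⟨u, hu⟩ := aux_sq_of_coprime_pos hmpos hmr hb1sq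
        obtain ⟨v, hv⟩ := aux_sq_of_coprime_pos hrpos hmr.symm (show r * m = b1 ^ 2 by linear_combination hb1sq)
        have hu0 : u ≠ 0 := by intro h0; rw [h0] at hu; simp at hu; omega
        have hv0 : v ≠ 0 := by intro h0; rw [h0] at hv; simp at hv; omega
        have huodd : Odd u := by
          rcases Int.even_or_odd u with hue | huo
          · exfalso
            have : Even m := by
              rw [hu]; exact (Int.even_pow).mpr ⟨hue, two_ne_zero⟩
            rw [Int.even_iff] at this; omega
          · exact huo
        have key : a ^ 2 = u ^ 4 + 4 * v ^ 4 := by rw [ha2, hr, hu, hv]; ring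
        have hma : IsCoprime m a := by
          have h1 : IsCoprime m (n ^ 2) := hmco.pow_right
          have h2 : a ^ 2 = n ^ 2 + m * m := by linear_combination ha2
          have h3 : IsCoprime m (a ^ 2) := by rw [h2]; exact h1.add_mul_left_right m
          exact h3.of_isCoprime_of_dvd_right (dvd_pow_self a two_ne_zero)
        obtain ⟨s, hs2⟩ : ∃ s, a - u ^ 2 = 2 * s := by
          have hev : Even (a - u ^ 2) := haodd.sub_odd huodd.pow
          obtain ⟨k, hk⟩ := hev; exact ⟨k, by linarith⟩
        obtain ⟨t, ht2⟩ : ∃ t, a + u ^ 2 = 2 * t := by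
          have hev : Even (a + u ^ 2) := haodd.add_odd huodd.pow
          obtain ⟨k, hk⟩ := hev; exact ⟨k, by linarith⟩
        have hsum : s + t = a := by linarith
        have hdif : t - s = u ^ 2 := by linarith
        have hst : s * t = v ^ 4 := by
          apply mul_left_cancel₀ (by norm_num : (4:ℤ) ≠ 0)
          linear_combination (-2*t) * hs2 - (a - u ^ 2) * ht2 + key
        have hav : u ^ 2 ≤ a := by
          by_contra hc'
          push_neg at hc'
          have h1' : a * a < u ^ 2 * u ^ 2 := mul_lt_mul'' hc' hc' ha.le ha.le
          have h1 : a ^ 2 < u ^ 4 := by linarith [h1']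
          have h2 : (0:ℤ) ≤ v ^ 4 := by positivity
          linarith
        have hsnn : 0 ≤ s := by linarith
        have hs0 : s ≠ 0 := by
          intro h0
          rw [h0] at hs2
          have hae : a = u ^ 2 := by linarith
          have hau4 : a ^ 2 = u ^ 4 := by rw [hae]; ring
          have hv4 : v ^ 4 = 0 := by linarith
          have : v = 0 := pow_eq_zero_iff (by norm_num : (4:ℕ) ≠ 0) |>.mp hv4
          exact hv0 this
        have hsp : 0 < s := lt_of_le_of_ne hsnn (Ne.symm hs0)
        have htp : 0 < t := by have := sq_nonneg u; linarith
        have hstco : IsCoprime s t := by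
          obtain ⟨x, y, hxy⟩ := hma
          exact ⟨y - x, y + x, by linear_combination y * hsum + x * hdif + hxy - x * hu⟩
        obtain ⟨e, he⟩ := aux_fourth s t v hsp hstco hst
        obtain ⟨f, hf⟩ := aux_fourth t s v htp hstco.symm (by linear_combination hst)
        have hfinal : f ^ 4 = e ^ 4 + u ^ 2 := by rw [← he, ← hf]; linarith
        have he0 : e ≠ 0 := by intro h0; rw [h0] at he; simp at he; omega
        have hf0 : f ≠ 0 := by intro h0; rw [h0] at hf; simp at hf; omega
        have hflt : f.natAbs < a.natAbs := by
          apply aux_natAbs_lt_of_sq_lt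
          have hta : t ≤ a := by linarith
          have hf2 : 1 ≤ f ^ 2 := by
            have := Int.lt_iff_add_one_le.mp (sq_pos_of_ne_zero hf0); linarith
          have h1 : f ^ 2 ≤ f ^ 4 := by
            have := le_self_pow₀ hf2 two_ne_zero
            linarith [this]
          have h2 : a < a ^ 2 := by
            have h3 : a * 1 < a * a := by
              apply mul_lt_mul_of_pos_left (by linarith) (by linarith)
            linarith [h3]
          rw [hf] at hta
          linarith
        apply IH f.natAbs (lt_of_lt_of_le hflt hA) |f| |e| |u|
          (le_of_eq (Int.natAbs_abs f)) (abs_pos.mpr hf0) (abs_pos.mpr he0)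
          (abs_pos.mpr hu0)
        rw [aux_abs_pow4, aux_abs_pow4, sq_abs]
        exact hfinal
    · -- b odd
      have triple : PythagoreanTriple (b ^ 2) c (a ^ 2) := by
        show b ^ 2 * b ^ 2 + c * c = a ^ 2 * a ^ 2
        linear_combination -h
      have hco2 : Int.gcd (b ^ 2) c = 1 :=
        Int.isCoprime_iff_gcd_eq_one.mp (hbc.pow_left)
      have hparb : b ^ 2 % 2 = 1 := Int.odd_iff.mp hbo.pow
      obtain ⟨m, n, hb1, hc2, ha2, hmn, hpar, hm0⟩ :=
        triple.coprime_classification' hco2 hparb (by positivity)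
      have hn0 : n ≠ 0 := by
        intro h0; rw [h0, mul_zero] at hc2; omega
      have hm0' : m ≠ 0 := by
        intro h0; rw [h0] at hc2; simp at hc2; omega
      have hnew : m ^ 4 = n ^ 4 + (a * b) ^ 2 := by
        linear_combination (-(m^2 + n^2)) * hb1 - b^2 * ha2
      have hlt : m.natAbs < a.natAbs := by
        apply aux_natAbs_lt_of_sq_lt
        have hn2 : 0 < n ^ 2 := by positivity
        nlinarith
      apply IH m.natAbs (lt_of_lt_of_le hlt hA) |m| |n| |a * b|
        (le_of_eq (Int.natAbs_abs m)) (abs_pos.mpr hm0') (abs_pos.mpr hn0)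
        (abs_pos.mpr (by positivity))
      rw [aux_abs_pow4, aux_abs_pow4, sq_abs]
      exact hnew
  · -- non-coprime: divide out the gcd
    have hgpos : 0 < Int.gcd a b := Int.gcd_pos_iff.mpr (Or.inl ha.ne')
    set g : ℕ := Int.gcd a b with hgdef
    have hg2 : 2 ≤ g := by omega
    have hgz : (0:ℤ) < (g:ℤ) := by exact_mod_cast hgpos
    have hga : (g:ℤ) ∣ a := Int.gcd_dvd_left a b
    have hgb : (g:ℤ) ∣ b := Int.gcd_dvd_right a b
    have hgc : (g:ℤ) ^ 2 ∣ c := by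
      have h1 : ((g:ℤ) ^ 2) ^ 2 ∣ c ^ 2 := by
        have h2 : (g:ℤ) ^ 4 ∣ a ^ 4 - b ^ 4 := by
          exact dvd_sub (pow_dvd_pow_of_dvd hga 4) (pow_dvd_pow_of_dvd hgb 4)
        have h3 : a ^ 4 - b ^ 4 = c ^ 2 := by linarith
        rw [h3] at h2
        have h4 : ((g:ℤ) ^ 2) ^ 2 = (g:ℤ) ^ 4 := by ring
        rw [h4]
        exact h2
      exact (Int.pow_dvd_pow_iff two_ne_zero).mp h1
    obtain ⟨a1, ha1⟩ := hga
    obtain ⟨b1, hb1⟩ := hgb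
    obtain ⟨c1, hc1⟩ := hgc
    have heq : a1 ^ 4 = b1 ^ 4 + c1 ^ 2 := by
      apply mul_left_cancel₀ (pow_ne_zero 4 hgz.ne' : ((g:ℤ)) ^ 4 ≠ 0)
      rw [ha1, hb1, hc1] at h
      linear_combination h
    have ha1p : 0 < a1 := by
      by_contra hcon
      push_neg at hcon
      have h2 : (g:ℤ) * a1 ≤ 0 := mul_nonpos_iff.mpr (Or.inl ⟨hgz.le, hcon⟩)
      linarith [ha1, h2]
    have hb1p : 0 < b1 := by
      by_contra hcon
      push_neg at hcon
      have h2 : (g:ℤ) * b1 ≤ 0 := mul_nonpos_iff.mpr (Or.inl ⟨hgz.le, hcon⟩)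
      linarith [hb1, h2]
    have hc1p : 0 < c1 := by
      by_contra hcon
      push_neg at hcon
      have h2 : (g:ℤ) ^ 2 * c1 ≤ 0 := mul_nonpos_iff.mpr (Or.inl ⟨(pow_pos hgz 2).le, hcon⟩)
      linarith [hc1, h2]
    have hlt : a1.natAbs < a.natAbs := by
      apply Int.natAbs_lt_natAbs_of_nonneg_of_lt ha1p.le
      have hgg : (g:ℤ) ≥ 2 := by exact_mod_cast hg2
      have h2 : 2 * a1 ≤ (g:ℤ) * a1 := mul_le_mul_of_nonneg_right hgg ha1p.le
      linarith [ha1, h2]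
    exact IH a1.natAbs (lt_of_lt_of_le hlt hA) a1 b1 c1 le_rfl ha1p hb1p hc1p heq

theorem x_pow_four_add_one_eq_two_sq (x y : ℕ) (hx : 0 < x) (hy : 0 < y)
    (h : x ^ 4 + 1 = 2 * y ^ 2) : x = 1 ∧ y = 1 := by
  have hz : (x:ℤ) ^ 4 + 1 = 2 * (y:ℤ) ^ 2 := by exact_mod_cast h
  have hxodd : Odd (x:ℤ) := by
    rcases Int.even_or_odd (x:ℤ) with he | ho
    · exfalso
      have h4 : Even ((x:ℤ) ^ 4) := (Int.even_pow).mpr ⟨he, by norm_num⟩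
      rw [Int.even_iff] at h4
      omega
    · exact ho
  obtain ⟨w, hw⟩ : ∃ w : ℤ, (x:ℤ) ^ 4 - 1 = 2 * w := by
    have h4 : Odd ((x:ℤ) ^ 4) := hxodd.pow
    obtain ⟨k, hk⟩ := h4; exact ⟨k, by omega⟩
  have heq : (y:ℤ) ^ 4 = (x:ℤ) ^ 4 + w ^ 2 := by
    apply mul_left_cancel₀ (by norm_num : (4:ℤ) ≠ 0)
    linear_combination (-(2*(y:ℤ)^2 + (x:ℤ)^4 + 1)) * hz + (2*w + (x:ℤ)^4 - 1) * hw
  by_cases hw0 : w = 0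
  · rw [hw0] at hw
    have hx4 : (x:ℤ) ^ 4 = 1 := by linarith
    have hx4' : (x:ℕ) ^ 4 = 1 := by exact_mod_cast hx4
    have hx1 : x = 1 := by
      rcases Nat.lt_or_ge x 2 with h2 | h2
      · omega
      · exfalso
        have := Nat.pow_le_pow_left h2 4
        omega
    subst hx1
    have hy2 : y ^ 2 = 1 := by linarith
    have hy1 : y = 1 := by
      rcases Nat.lt_or_ge y 2 with h2 | h2
      · omega
      · exfalso
        have := Nat.pow_le_pow_left h2 2
        omega
    exact ⟨rfl, hy1⟩
  · exfalso
    exact descent (y:ℤ).natAbs |(y:ℤ)| |(x:ℤ)| |w| (le_of_eq (Int.natAbs_abs _))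
      (abs_pos.mpr (Int.natCast_ne_zero.mpr hy.ne')) (abs_pos.mpr (Int.natCast_ne_zero.mpr hx.ne')) (abs_pos.mpr hw0)
      (by rw [aux_abs_pow4, aux_abs_pow4, sq_abs]; exact heq)
end

section
/- If N is an odd positive integer satisfying σ_∞(σ_∞(N)) = 2N, then σ_∞(N) has at most 2 distinct prime factors. -/
lemma two_dvd_inner {p e : ℕ} (hp : Odd p) (he : e ≠ 0) :
    2 ∣ ∏ j ∈ Finset.range e, if e.testBit j then p ^ 2 ^ j + 1 else 1 := by
  obtain ⟨j, hj⟩ := Nat.exists_testBit_of_ne_zero he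
  have hje : j < e := lt_of_lt_of_le (Nat.lt_two_pow_self (n := j)) (Nat.ge_two_pow_of_testBit hj)
  have hmem : j ∈ Finset.range e := Finset.mem_range.2 hje
  have hdvd : (if e.testBit j then p ^ 2 ^ j + 1 else 1) ∣
      ∏ j ∈ Finset.range e, if e.testBit j then p ^ 2 ^ j + 1 else 1 :=
    Finset.dvd_prod_of_mem _ hmem
  rw [if_pos hj] at hdvd
  exact dvd_trans (by simpa using (hp.pow (n := 2 ^ j)).add_one.two_dvd) hdvd

lemma pow_card_odd_dvd_infsigma (M : ℕ) :
    2 ^ (M.primeFactors.filter (fun p => Odd p)).card ∣ infsigma M := by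
  unfold infsigma
  rw [Finsupp.prod, Nat.support_factorization]
  calc 2 ^ (M.primeFactors.filter (fun p => Odd p)).card
      = ∏ _p ∈ M.primeFactors.filter (fun p => Odd p), 2 := by
        rw [Finset.prod_const]
    _ ∣ ∏ p ∈ M.primeFactors.filter (fun p => Odd p),
          (∏ j ∈ Finset.range (M.factorization p),
            if (M.factorization p).testBit j then p ^ 2 ^ j + 1 else 1) := by
        refine Finset.prod_dvd_prod_of_dvd _ _ fun p hp => ?_
        rw [Finset.mem_filter] at hp
        exact two_dvd_inner hp.2
          (Nat.Prime.factorization_pos_of_dvd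
            (Nat.prime_of_mem_primeFactors hp.1)
            (Nat.mem_primeFactors.1 hp.1).2.2
            (Nat.dvd_of_mem_primeFactors hp.1)).ne'
    _ ∣ ∏ p ∈ M.primeFactors,
          (∏ j ∈ Finset.range (M.factorization p),
            if (M.factorization p).testBit j then p ^ 2 ^ j + 1 else 1) :=
        Finset.prod_dvd_prod_of_subset _ _ _ (Finset.filter_subset _ _)

theorem omega_infsigma_le_two_of_odd_superperfect (N : ℕ) (hN : 0 < N) (hodd : Odd N)
    (h : infsigma (infsigma N) = 2 * N) :
    (infsigma N).primeFactors.card ≤ 2 := by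
  set M := infsigma N with hM
  have hdvd : 2 ^ (M.primeFactors.filter (fun p => Odd p)).card ∣ 2 * N := by
    rw [← h]; exact pow_card_odd_dvd_infsigma M
  have h2N : (2 * N) ≠ 0 := by positivity
  have hcard : (M.primeFactors.filter (fun p => Odd p)).card ≤ 1 := by
    by_contra hc
    push_neg at hc
    have h4 : (4 : ℕ) ∣ 2 * N := dvd_trans (by
      calc (4:ℕ) = 2 ^ 2 := by norm_num
        _ ∣ 2 ^ (M.primeFactors.filter (fun p => Odd p)).card := pow_dvd_pow 2 hc) hdvd
    have : (2 : ℕ) ∣ N := by omega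
    exact (Nat.not_even_iff_odd.2 hodd) (even_iff_two_dvd.2 this)
  have hsplit : M.primeFactors.filter (fun p => ¬ Odd p) ⊆ {2} := by
    intro p hp
    rw [Finset.mem_filter] at hp
    have hprime := Nat.prime_of_mem_primeFactors hp.1
    rcases hprime.eq_two_or_odd' with h2 | ho
    · simp [h2]
    · exact absurd ho hp.2
  have h2card : (M.primeFactors.filter (fun p => ¬ Odd p)).card ≤ 1 := by
    have := Finset.card_le_card hsplit
    simpa using this
  have := Finset.card_filter_add_card_filter_not
    (s := M.primeFactors) (p := fun p => Odd p)
  omega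
end
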